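/- arXiv:1609.08112 — 3 statements merged into one kernel-verified Lean document; each statement's English description precedes it below -/
import Mathlib

section
/- Let B be an integral domain and let A = [A^{ij}] ⊆ M_d(B) be a tiled matrix ring. Fix indices i, j, k ∈ {1,…,d} and suppose that A^{ij} ≠ 0, A^{ji} ≠ 0, and A^{ii}·1_d = Z(A). Suppose moreover that there exists a nonzero p ∈ e_iAe_j such that for every Z(A)-module homomorphism f : e_iAe_j → e_iAe_k there is some r ∈ e_jAe_k satisfying f(p) = pr. Then the map e_jAe_k → Hom_{Z(A)}(e_iAe_j, e_iAe_k) sending r to the homomorphism q ↦ qr is an isomorphism of Z(A)-modules. -/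
open Matrix

/-- The corner space `e_a A e_b` of a subring `A` of a matrix ring, where
`e_a = stdBasisMatrix a a 1` is the idempotent at index `a`. -/
def cornerSet {B : Type*} [CommRing B] {d : ℕ}
    (A : Set (Matrix (Fin d) (Fin d) B)) (a b : Fin d) :
    Set (Matrix (Fin d) (Fin d) B) :=
  {M | ∃ N ∈ A, M = Matrix.single a a 1 * N * Matrix.single b b 1}

/-- `z` is an element of the center `Z(A)`. -/
def IsCenterElt {B : Type*} [CommRing B] {d : ℕ}
    (A : Set (Matrix (Fin d) (Fin d) B)) (z : Matrix (Fin d) (Fin d) B) : Prop :=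
  z ∈ A ∧ ∀ a ∈ A, z * a = a * z

/-- `f` represents a `Z(A)`-module homomorphism `e_i A e_j → e_i A e_k`:
it maps the corner `e_i A e_j` into the corner `e_i A e_k`, is additive, and is
`Z(A)`-linear (the `Z(A)`-action being multiplication in the matrix ring). -/
def IsCornerZHom' {B : Type*} [CommRing B] {d : ℕ}
    (A : Set (Matrix (Fin d) (Fin d) B)) (i j k : Fin d)
    (f : Matrix (Fin d) (Fin d) B → Matrix (Fin d) (Fin d) B) : Prop :=
  (∀ M ∈ cornerSet A i j, f M ∈ cornerSet A i k) ∧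
  (∀ M ∈ cornerSet A i j, ∀ N ∈ cornerSet A i j, f (M + N) = f M + f N) ∧
  (∀ z, IsCenterElt A z → ∀ M ∈ cornerSet A i j, f (z * M) = z * f M)

lemma std_mem {B : Type*} [CommRing B] {d : ℕ}
    (T : Fin d → Fin d → AddSubgroup B)
    (A : Subring (Matrix (Fin d) (Fin d) B))
    (hA : ∀ M, M ∈ A ↔ ∀ a b, M a b ∈ T a b) {a b : Fin d} {c : B}
    (hc : c ∈ T a b) : Matrix.single a b c ∈ A := by
  refine (hA _).mpr fun s t => ?_
  simp only [Matrix.single, of_apply]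
  split
  · next h => obtain ⟨rfl, rfl⟩ := h; exact hc
  · exact (T s t).zero_mem

lemma corner_sandwich {B : Type*} [CommRing B] {d : ℕ} (a b : Fin d)
    (N : Matrix (Fin d) (Fin d) B) :
    Matrix.single a a 1 * N * Matrix.single b b 1 = Matrix.single a b (N a b) := by
  ext x y
  rcases eq_or_ne x a with rfl | hx
  · rcases eq_or_ne y b with rfl | hy
    · simp
    · rw [mul_single_apply_of_ne _ _ _ _ _ hy,
        single_apply_of_ne _ _ _ _ _ (by tauto)]
  · rw [Matrix.mul_apply]
    rw [single_apply_of_ne _ _ _ _ _ (by tauto)]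
    apply Finset.sum_eq_zero
    intro t _
    rw [single_mul_apply_of_ne _ _ _ _ _ hx, zero_mul]

lemma mem_cornerSet_iff {B : Type*} [CommRing B] {d : ℕ}
    (T : Fin d → Fin d → AddSubgroup B)
    (A : Subring (Matrix (Fin d) (Fin d) B))
    (hA : ∀ M, M ∈ A ↔ ∀ a b, M a b ∈ T a b) (a b : Fin d)
    (M : Matrix (Fin d) (Fin d) B) :
    M ∈ cornerSet (A : Set (Matrix (Fin d) (Fin d) B)) a b ↔
      ∃ c ∈ T a b, M = Matrix.single a b c := by
  constructor
  · rintro ⟨N, hN, rfl⟩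
    exact ⟨N a b, (hA N).mp hN a b, corner_sandwich a b N⟩
  · rintro ⟨c, hc, rfl⟩
    refine ⟨Matrix.single a b c, std_mem T A hA hc, ?_⟩
    rw [corner_sandwich]
    simp [Matrix.single]

lemma T_mul {B : Type*} [CommRing B] {d : ℕ}
    (T : Fin d → Fin d → AddSubgroup B)
    (A : Subring (Matrix (Fin d) (Fin d) B))
    (hA : ∀ M, M ∈ A ↔ ∀ a b, M a b ∈ T a b) {a b c : Fin d} {x y : B}
    (hx : x ∈ T a b) (hy : y ∈ T b c) : x * y ∈ T a c := by
  have hmx : Matrix.single a b x ∈ A := std_mem T A hA hx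
  have hmy : Matrix.single b c y ∈ A := std_mem T A hA hy
  have := (hA _).mp (A.mul_mem hmx hmy) a c
  rwa [single_mul_single_same, single_apply_same] at this

lemma smul_one_mul_std {B : Type*} [CommRing B] {d : ℕ} (s c : B) (a b : Fin d) :
    (s • (1 : Matrix (Fin d) (Fin d) B)) * Matrix.single a b c
      = Matrix.single a b (s * c) := by
  rw [smul_mul_assoc, one_mul, smul_single, smul_eq_mul]

/-- Let `B` be an integral domain and `A = [A^{ij}] ⊆ M_d(B)` a tiled matrix
ring.  Suppose `A^{ij} ≠ 0`, `A^{ji} ≠ 0`, `A^{ii}·1_d = Z(A)`, and that there is a nonzero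
`p ∈ e_i A e_j` such that every `Z(A)`-module homomorphism `f : e_i A e_j → e_i A e_k`
satisfies `f(p) = p r` for some `r ∈ e_j A e_k`.  Then the map
`e_j A e_k → Hom_{Z(A)}(e_i A e_j, e_i A e_k)`, `r ↦ (q ↦ q r)`, is an isomorphism of
`Z(A)`-modules: it is well defined (right multiplication by each `r ∈ e_j A e_k` is a
`Z(A)`-module homomorphism of the corners), injective, and surjective. -/
theorem corner_hom_right_mult_iso {B : Type*} [CommRing B] [IsDomain B] {d : ℕ}
    (T : Fin d → Fin d → AddSubgroup B)
    (A : Subring (Matrix (Fin d) (Fin d) B))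
    (hA : ∀ M, M ∈ A ↔ ∀ a b, M a b ∈ T a b)
    (i j k : Fin d)
    (hij : T i j ≠ ⊥) (hji : T j i ≠ ⊥)
    (hZ : ∀ z, IsCenterElt (A : Set (Matrix (Fin d) (Fin d) B)) z ↔
      ∃ s ∈ T i i, z = s • (1 : Matrix (Fin d) (Fin d) B))
    (hp : ∃ p ∈ cornerSet (A : Set (Matrix (Fin d) (Fin d) B)) i j, p ≠ 0 ∧
      ∀ f, IsCornerZHom' (A : Set (Matrix (Fin d) (Fin d) B)) i j k f →
        ∃ r ∈ cornerSet (A : Set (Matrix (Fin d) (Fin d) B)) j k, f p = p * r) :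
    (∀ r ∈ cornerSet (A : Set (Matrix (Fin d) (Fin d) B)) j k,
      IsCornerZHom' (A : Set (Matrix (Fin d) (Fin d) B)) i j k (fun q => q * r)) ∧
    (∀ r ∈ cornerSet (A : Set (Matrix (Fin d) (Fin d) B)) j k,
      ∀ r' ∈ cornerSet (A : Set (Matrix (Fin d) (Fin d) B)) j k,
        (∀ q ∈ cornerSet (A : Set (Matrix (Fin d) (Fin d) B)) i j, q * r = q * r') →
          r = r') ∧
    (∀ f, IsCornerZHom' (A : Set (Matrix (Fin d) (Fin d) B)) i j k f →
      ∃ r ∈ cornerSet (A : Set (Matrix (Fin d) (Fin d) B)) j k,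
        ∀ q ∈ cornerSet (A : Set (Matrix (Fin d) (Fin d) B)) i j, f q = q * r) := by
  have hcorner := mem_cornerSet_iff T A hA
  refine ⟨?_, ?_, ?_⟩
  · -- well-definedness
    intro r hr
    obtain ⟨y, hy, rfl⟩ := (hcorner j k r).mp hr
    refine ⟨?_, ?_, ?_⟩
    · intro M hM
      obtain ⟨x, hx, rfl⟩ := (hcorner i j M).mp hM
      exact (hcorner i k _).mpr ⟨x * y, T_mul T A hA hx hy,
        by simp [single_mul_single_same]⟩
    · intro M _ N _
      exact add_mul M N _
    · intro z _ M _
      exact mul_assoc z M _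
  · -- injectivity
    intro r hr r' hr' h
    obtain ⟨y, hy, rfl⟩ := (hcorner j k r).mp hr
    obtain ⟨y', hy', rfl⟩ := (hcorner j k r').mp hr'
    obtain ⟨x, hx, hxne⟩ : ∃ x ∈ T i j, x ≠ 0 := by
      by_contra hcon
      push_neg at hcon
      exact hij ((AddSubgroup.eq_bot_iff_forall _).mpr hcon)
    have := h (Matrix.single i j x) ((hcorner i j _).mpr ⟨x, hx, rfl⟩)
    rw [single_mul_single_same, single_mul_single_same] at this
    have hxy : x * y = x * y' := by
      have := congrFun (congrFun this i) k
      simpa using this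
    have : y = y' := mul_left_cancel₀ hxne hxy
    rw [this]
  · -- surjectivity
    intro f hf
    obtain ⟨p, hpmem, hpne, hpr⟩ := hp
    obtain ⟨x₀, hx₀, rfl⟩ := (hcorner i j p).mp hpmem
    have hx₀ne : x₀ ≠ 0 := fun h => hpne (by simp [h])
    obtain ⟨r, hrmem, hfp⟩ := hpr f hf
    obtain ⟨y, hy, rfl⟩ := (hcorner j k r).mp hrmem
    obtain ⟨u, hu, hune⟩ : ∃ u ∈ T j i, u ≠ 0 := by
      by_contra hcon
      push_neg at hcon
      exact hji ((AddSubgroup.eq_bot_iff_forall _).mpr hcon)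
    refine ⟨Matrix.single j k y, hrmem, ?_⟩
    intro q hq
    obtain ⟨x, hx, rfl⟩ := (hcorner i j q).mp hq
    -- f q lies in corner i k
    obtain ⟨c, hc, hfq⟩ := (hcorner i k _).mp (hf.1 _ hq)
    -- two central elements
    have hz : IsCenterElt (A : Set (Matrix (Fin d) (Fin d) B))
        ((x * u) • (1 : Matrix (Fin d) (Fin d) B)) :=
      (hZ _).mpr ⟨x * u, T_mul T A hA hx hu, rfl⟩
    have hz' : IsCenterElt (A : Set (Matrix (Fin d) (Fin d) B))
        ((x₀ * u) • (1 : Matrix (Fin d) (Fin d) B)) :=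
      (hZ _).mpr ⟨x₀ * u, T_mul T A hA hx₀ hu, rfl⟩
    have key1 := hf.2.2 _ hz (Matrix.single i j x₀) hpmem
    have key2 := hf.2.2 _ hz' (Matrix.single i j x) hq
    have harg : ((x * u) • (1 : Matrix (Fin d) (Fin d) B)) * Matrix.single i j x₀
        = ((x₀ * u) • (1 : Matrix (Fin d) (Fin d) B)) * Matrix.single i j x := by
      rw [smul_one_mul_std, smul_one_mul_std]
      ring_nf
    rw [harg, key2, hfq, hfp, single_mul_single_same, smul_one_mul_std,
      smul_one_mul_std] at key1
    have hentry : x₀ * u * c = x * u * (x₀ * y) := by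
      have := congrFun (congrFun key1 i) k
      simpa using this
    have hcxy : c = x * y := by
      apply mul_left_cancel₀ (mul_ne_zero hx₀ne hune)
      calc x₀ * u * c = x * u * (x₀ * y) := hentry
        _ = x₀ * u * (x * y) := by ring
    rw [hfq, hcxy, single_mul_single_same]
end

section
/- Let k be a field, B = k[x,y,z,w], S = k[xz, yz, xw, yw] ⊆ B, I := xS + yS, J := zS + wS, R := k + xzS + yzS, and let A ⊆ M₃(B) be the tiled matrix algebra with entry pattern [[S, I, zI],[J, S, zS],[S, I, R]]. Let e₃ ∈ A be the matrix unit with 1 in the (3,3) slot, so that Ae₃ is the left A-module of column vectors with first entry in zI = xzS + yzS, second entry in zS, and third entry in R; Ae₃ is an R-module via scalar multiplication. Then the k-algebra homomorphism A → End_R(Ae₃) sending a ∈ A to left multiplication by a is an isomorphism. -/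
open MvPolynomial

set_option synthInstance.maxHeartbeats 1000000
set_option maxHeartbeats 1000000

noncomputable section

/-- `S = k[xz, yz, xw, yw] ⊆ B = k[x,y,z,w]`, where `x = X 0`, `y = X 1`, `z = X 2`,
`w = X 3`. -/
def quadS (k : Type*) [Field k] : Subalgebra k (MvPolynomial (Fin 4) k) :=
  Algebra.adjoin k ({X 0 * X 2, X 1 * X 2, X 0 * X 3, X 1 * X 3} : Set (MvPolynomial (Fin 4) k))

/-- `I = xS + yS` as an `S`-submodule of `B`. -/
def Imod (k : Type*) [Field k] : Submodule ↥(quadS k) (MvPolynomial (Fin 4) k) :=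
  Submodule.span ↥(quadS k) ({X 0, X 1} : Set (MvPolynomial (Fin 4) k))

/-- `J = zS + wS` as an `S`-submodule of `B`. -/
def Jmod (k : Type*) [Field k] : Submodule ↥(quadS k) (MvPolynomial (Fin 4) k) :=
  Submodule.span ↥(quadS k) ({X 2, X 3} : Set (MvPolynomial (Fin 4) k))

/-- `zI = xzS + yzS` as an `S`-submodule of `B`. -/
def zImod (k : Type*) [Field k] : Submodule ↥(quadS k) (MvPolynomial (Fin 4) k) :=
  Submodule.span ↥(quadS k) ({X 0 * X 2, X 1 * X 2} : Set (MvPolynomial (Fin 4) k))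

/-- `zS` as an `S`-submodule of `B`. -/
def zSmod (k : Type*) [Field k] : Submodule ↥(quadS k) (MvPolynomial (Fin 4) k) :=
  Submodule.span ↥(quadS k) ({X 2} : Set (MvPolynomial (Fin 4) k))

/-- `R = k + xzS + yzS` as a subset of `B`. -/
def Rset (k : Type*) [Field k] : Set (MvPolynomial (Fin 4) k) :=
  {b | ∃ c : k, ∃ m ∈ zImod k, b = algebraMap k (MvPolynomial (Fin 4) k) c + m}

/-- The set of `3 × 3` matrices over `B` with entry pattern `[[S, I, zI], [J, S, zS], [S, I, R]]`. -/
def A3set (k : Type*) [Field k] : Set (Matrix (Fin 3) (Fin 3) (MvPolynomial (Fin 4) k)) :=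
  {M | M 0 0 ∈ quadS k ∧ M 0 1 ∈ Imod k ∧ M 0 2 ∈ zImod k ∧
       M 1 0 ∈ Jmod k ∧ M 1 1 ∈ quadS k ∧ M 1 2 ∈ zSmod k ∧
       M 2 0 ∈ quadS k ∧ M 2 1 ∈ Imod k ∧ M 2 2 ∈ Rset k}

/-- The set of column vectors `Ae₃` with first entry in `zI`, second entry in `zS`, and
third entry in `R`. -/
def Ae3set (k : Type*) [Field k] : Set (Fin 3 → MvPolynomial (Fin 4) k) :=
  {v | v 0 ∈ zImod k ∧ v 1 ∈ zSmod k ∧ v 2 ∈ Rset k}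

namespace A3aux
variable {k : Type*} [Field k]

/-- the weight of a monomial exponent -/
def wt (μ : Fin 4 →₀ ℕ) : ℤ := (μ 0 : ℤ) + μ 1 - μ 2 - μ 3

lemma wt_add (μ ν : Fin 4 →₀ ℕ) : wt (μ + ν) = wt μ + wt ν := by
  simp [wt, Finsupp.add_apply]; push_cast; ring

lemma wt_zero : wt (0 : Fin 4 →₀ ℕ) = 0 := by simp [wt]

example : wt (Finsupp.single (0 : Fin 4) 1 + Finsupp.single (2:Fin 4) 1) = 0 := by
  simp [wt, Finsupp.single_apply, Finsupp.add_apply]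

example (i : Fin 4) : (X i : MvPolynomial (Fin 4) k) = monomial (Finsupp.single i 1) 1 := rfl

lemma X_mul_X_eq (i j : Fin 4) : (X i * X j : MvPolynomial (Fin 4) k)
    = monomial (Finsupp.single i 1 + Finsupp.single j 1) 1 := by
  rw [show (X i : MvPolynomial (Fin 4) k) = monomial (Finsupp.single i 1) 1 from rfl,
    show (X j : MvPolynomial (Fin 4) k) = monomial (Finsupp.single j 1) 1 from rfl,
    monomial_mul, one_mul]

lemma supp_mul_cond {p q : MvPolynomial (Fin 4) k} {P Q R : (Fin 4 →₀ ℕ) → Prop}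
    (hp : ∀ μ ∈ p.support, P μ) (hq : ∀ μ ∈ q.support, Q μ)
    (hPQ : ∀ a b, P a → Q b → R (a + b)) :
    ∀ μ ∈ (p * q).support, R μ := by
  classical
  intro μ hμ
  obtain ⟨a, ha, b, hb, rfl⟩ := Finset.mem_add.mp (support_mul p q hμ)
  exact hPQ a b (hp a ha) (hq b hb)

/-- the subalgebra of weight-0 polynomials -/
def balSub : Subalgebra k (MvPolynomial (Fin 4) k) where
  carrier := {p | ∀ μ ∈ p.support, wt μ = 0}
  mul_mem' := fun {a b} ha hb => supp_mul_cond ha hb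
    (fun x y hx hy => by rw [wt_add, hx, hy, add_zero])
  add_mem' := fun {a b} ha hb μ hμ => by
    rcases Finset.mem_union.mp (Finsupp.support_add hμ) with h | h
    exacts [ha μ h, hb μ h]
  algebraMap_mem' := fun c μ hμ => by
    have : μ ∈ (C c : MvPolynomial (Fin 4) k).support := hμ
    rw [mem_support_iff, coeff_C] at this
    by_cases h : μ = 0
    · rw [h]; exact wt_zero
    · simp [Ne.symm h] at this

lemma quadS_le_bal : quadS k ≤ balSub := by
  rw [quadS]
  apply Algebra.adjoin_le
  rintro p hp
  simp only [Set.mem_insert_iff, Set.mem_singleton_iff] at hp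
  have key : ∀ (i j : Fin 4), (i = 0 ∨ i = 1) → (j = 2 ∨ j = 3) →
      ∀ μ ∈ ((X i * X j : MvPolynomial (Fin 4) k)).support, wt μ = 0 := by
    intro i j hi hj μ hμ
    rw [X_mul_X_eq, mem_support_iff, coeff_monomial] at hμ
    rcases eq_or_ne (Finsupp.single i 1 + Finsupp.single j 1) μ with rfl | h
    · rcases hi with rfl | rfl <;> rcases hj with rfl | rfl <;>
        simp [wt, Finsupp.single_apply, Finsupp.add_apply]
    · simp [h] at hμ
  rcases hp with rfl | rfl | rfl | rfl
  · exact key 0 2 (Or.inl rfl) (Or.inl rfl)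
  · exact key 1 2 (Or.inr rfl) (Or.inl rfl)
  · exact key 0 3 (Or.inl rfl) (Or.inr rfl)
  · exact key 1 3 (Or.inr rfl) (Or.inr rfl)

lemma hS {p : MvPolynomial (Fin 4) k} (hp : p ∈ quadS k) : ∀ μ ∈ p.support, wt μ = 0 :=
  quadS_le_bal hp

/-- graded submodules over quadS: weight `c`, z-exponent at least `e` -/
def gradedSub (c : ℤ) (e : ℕ) : Submodule ↥(quadS k) (MvPolynomial (Fin 4) k) where
  carrier := {p | ∀ μ ∈ p.support, wt μ = c ∧ e ≤ μ 2}
  add_mem' := fun {a b} ha hb μ hμ => by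
    rcases Finset.mem_union.mp (Finsupp.support_add hμ) with h | h
    exacts [ha μ h, hb μ h]
  zero_mem' := by intro μ hμ; simp at hμ
  smul_mem' := fun s {p} hp => by
    have : (s • p : MvPolynomial (Fin 4) k) = (s : MvPolynomial (Fin 4) k) * p := rfl
    rw [this]
    exact supp_mul_cond (hS s.2) hp (fun a b ha hb => by
      constructor
      · rw [wt_add, ha, hb.1, zero_add]
      · rw [Finsupp.add_apply]; omega)


lemma supp_single_subset {i j : Fin 4} :
    ((X i * X j : MvPolynomial (Fin 4) k)).support ⊆ {Finsupp.single i 1 + Finsupp.single j 1} := by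
  rw [X_mul_X_eq]; exact support_monomial_subset

lemma Imod_le : Imod k ≤ gradedSub 1 0 := by
  rw [Imod]; apply Submodule.span_le.mpr
  rintro p hp μ hμ
  rcases hp with rfl | hp
  · rw [support_X, Finset.mem_singleton] at hμ
    subst hμ; refine ⟨by simp [wt, Finsupp.single_apply], by omega⟩
  · rw [Set.mem_singleton_iff] at hp; subst hp
    rw [support_X, Finset.mem_singleton] at hμ
    subst hμ; refine ⟨by simp [wt, Finsupp.single_apply], by omega⟩

lemma Jmod_le : Jmod k ≤ gradedSub (-1) 0 := by
  rw [Jmod]; apply Submodule.span_le.mpr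
  rintro p hp μ hμ
  rcases hp with rfl | hp
  · rw [support_X, Finset.mem_singleton] at hμ
    subst hμ; refine ⟨by simp [wt, Finsupp.single_apply], by omega⟩
  · rw [Set.mem_singleton_iff] at hp; subst hp
    rw [support_X, Finset.mem_singleton] at hμ
    subst hμ; refine ⟨by simp [wt, Finsupp.single_apply], by omega⟩

lemma zSmod_le : zSmod k ≤ gradedSub (-1) 1 := by
  rw [zSmod]; apply Submodule.span_le.mpr
  rintro p hp μ hμ
  rw [Set.mem_singleton_iff] at hp; subst hp
  rw [support_X, Finset.mem_singleton] at hμ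
  subst hμ
  refine ⟨by simp [wt, Finsupp.single_apply], by simp [Finsupp.single_apply]⟩

lemma zImod_le : zImod k ≤ gradedSub 0 1 := by
  rw [zImod]; apply Submodule.span_le.mpr
  rintro p hp μ hμ
  have h2 : μ = Finsupp.single (0:Fin 4) 1 + Finsupp.single (2:Fin 4) 1 ∨
      μ = Finsupp.single (1:Fin 4) 1 + Finsupp.single (2:Fin 4) 1 := by
    rcases hp with rfl | hp
    · exact Or.inl (Finset.mem_singleton.mp (supp_single_subset hμ))
    · rw [Set.mem_singleton_iff] at hp; subst hp
      exact Or.inr (Finset.mem_singleton.mp (supp_single_subset hμ))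
  rcases h2 with rfl | rfl <;>
    exact ⟨by simp [wt, Finsupp.single_apply, Finsupp.add_apply],
      by simp [Finsupp.single_apply, Finsupp.add_apply]⟩

lemma hI {p : MvPolynomial (Fin 4) k} (hp : p ∈ Imod k) : ∀ μ ∈ p.support, wt μ = 1 :=
  fun μ h => ((Imod_le hp) μ h).1

lemma hJ {p : MvPolynomial (Fin 4) k} (hp : p ∈ Jmod k) : ∀ μ ∈ p.support, wt μ = -1 :=
  fun μ h => ((Jmod_le hp) μ h).1

lemma hzS {p : MvPolynomial (Fin 4) k} (hp : p ∈ zSmod k) :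
    ∀ μ ∈ p.support, wt μ = -1 ∧ 1 ≤ μ 2 := fun μ h => (zSmod_le hp) μ h

lemma hzI {p : MvPolynomial (Fin 4) k} (hp : p ∈ zImod k) :
    ∀ μ ∈ p.support, wt μ = 0 ∧ 1 ≤ μ 2 := fun μ h => (zImod_le hp) μ h

lemma hRs {p : MvPolynomial (Fin 4) k} (hp : p ∈ Rset k) :
    ∀ μ ∈ p.support, μ ≠ 0 → wt μ = 0 ∧ 1 ≤ μ 2 := by
  obtain ⟨c, m, hm, rfl⟩ := hp
  intro μ hμ hne
  rcases Finset.mem_union.mp (Finsupp.support_add hμ) with h | h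
  · exfalso
    have hac : (algebraMap k (MvPolynomial (Fin 4) k)) c = C c := rfl
    rw [hac] at h
    have h2 : coeff μ (C c : MvPolynomial (Fin 4) k) ≠ 0 := mem_support_iff.mp h
    rw [coeff_C, if_neg (Ne.symm hne)] at h2
    exact h2 rfl
  · exact hzI hm μ h

lemma single_sub_eq (μ : Fin 4 →₀ ℕ) (i j : Fin 4) (hne : i ≠ j) (hi : 1 ≤ μ i) (hj : 1 ≤ μ j) :
    Finsupp.single i 1 + Finsupp.single j 1 + (μ - Finsupp.single i 1 - Finsupp.single j 1) = μ := by
  ext a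
  simp only [Finsupp.add_apply, Finsupp.tsub_apply, Finsupp.single_apply]
  rcases eq_or_ne i a with rfl | hia
  · rw [if_pos rfl, if_neg (fun h : j = i => hne h.symm)]
    omega
  · rw [if_neg hia]
    rcases eq_or_ne j a with rfl | hja
    · rw [if_pos rfl]; omega
    · rw [if_neg hja]; omega

lemma single_add_cancel (μ : Fin 4 →₀ ℕ) (i : Fin 4) (hi : 1 ≤ μ i) :
    (μ - Finsupp.single i 1) + Finsupp.single i 1 = μ :=
  tsub_add_cancel_of_le (Finsupp.single_le_iff.mpr hi)

lemma wt_sub_single (μ : Fin 4 →₀ ℕ) (i : Fin 4) (hi : 1 ≤ μ i) :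
    wt (μ - Finsupp.single i 1) = wt μ - wt (Finsupp.single i 1) := by
  have h := wt_add (μ - Finsupp.single i 1) (Finsupp.single i 1)
  rw [single_add_cancel μ i hi] at h
  omega

lemma wt_single_01 {i : Fin 4} (h : i = 0 ∨ i = 1) : wt (Finsupp.single i (1:ℕ)) = 1 := by
  rcases h with rfl | rfl <;> simp [wt, Finsupp.single_apply]

lemma wt_single_23 {i : Fin 4} (h : i = 2 ∨ i = 3) : wt (Finsupp.single i (1:ℕ)) = -1 := by
  rcases h with rfl | rfl <;> simp [wt, Finsupp.single_apply]

lemma XX_mem_quadS {i j : Fin 4} (hi : i = 0 ∨ i = 1) (hj : j = 2 ∨ j = 3) :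
    (X i * X j : MvPolynomial (Fin 4) k) ∈ quadS k := by
  apply Algebra.subset_adjoin
  rcases hi with rfl | rfl <;> rcases hj with rfl | rfl <;> simp

lemma mono_S : ∀ (n : ℕ) (μ : Fin 4 →₀ ℕ), μ 2 + μ 3 = n → wt μ = 0 → ∀ c : k,
    monomial μ c ∈ quadS k := by
  intro n
  induction n with
  | zero =>
    intro μ hn hw c
    have hμ : μ = 0 := by
      ext a
      have h0 : (μ 0 : ℤ) + μ 1 - μ 2 - μ 3 = 0 := hw
      fin_cases a <;> simp <;> omega
    rw [hμ]
    have : (monomial (0 : Fin 4 →₀ ℕ) c : MvPolynomial (Fin 4) k) = C c := by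
      simp [monomial_zero']
    rw [this]
    exact (quadS k).algebraMap_mem c
  | succ n ih =>
    intro μ hn hw c
    have h0 : (μ 0 : ℤ) + μ 1 - μ 2 - μ 3 = 0 := hw
    have hij : ∃ i j : Fin 4, (i = 0 ∨ i = 1) ∧ (j = 2 ∨ j = 3) ∧ 1 ≤ μ i ∧ 1 ≤ μ j := by
      by_cases h2 : 1 ≤ μ 2
      · by_cases hx : 1 ≤ μ 0
        · exact ⟨0, 2, Or.inl rfl, Or.inl rfl, hx, h2⟩
        · exact ⟨1, 2, Or.inr rfl, Or.inl rfl, by omega, h2⟩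
      · by_cases hx : 1 ≤ μ 0
        · exact ⟨0, 3, Or.inl rfl, Or.inr rfl, hx, by omega⟩
        · exact ⟨1, 3, Or.inr rfl, Or.inr rfl, by omega, by omega⟩
    obtain ⟨i, j, hi, hj, hμi, hμj⟩ := hij
    have hne : i ≠ j := by
      rcases hi with rfl | rfl <;> rcases hj with rfl | rfl <;> decide
    set μ' := μ - Finsupp.single i 1 - Finsupp.single j 1 with hμ'
    have hkey : Finsupp.single i 1 + Finsupp.single j 1 + μ' = μ :=
      single_sub_eq μ i j hne hμi hμj
    have heq : (X i * X j : MvPolynomial (Fin 4) k) * monomial μ' c = monomial μ c := by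
      rw [X_mul_X_eq, monomial_mul, one_mul, hkey]
    rw [← heq]
    have hwt' : wt μ' = 0 := by
      have := wt_add (Finsupp.single i 1 + Finsupp.single j 1) μ'
      rw [hkey, wt_add, wt_single_01 hi, wt_single_23 hj] at this
      omega
    have hμ'a : ∀ a : Fin 4, μ' a = μ a - (Finsupp.single i 1) a - (Finsupp.single j 1) a := by
      intro a; simp [hμ', Finsupp.tsub_apply]
    have hn' : μ' 2 + μ' 3 = n := by
      have h2 := hμ'a 2
      have h3 := hμ'a 3
      have hj2 : (Finsupp.single i 1) 2 + (Finsupp.single i 1) 3 = 0 := by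
        rcases hi with rfl | rfl <;> simp [Finsupp.single_apply]
      have hj3 : (Finsupp.single j 1) 2 + (Finsupp.single j 1) 3 = 1 := by
        rcases hj with rfl | rfl <;> simp [Finsupp.single_apply]
      have hle2 : (Finsupp.single i 1) 2 ≤ μ 2 ∧ (Finsupp.single j 1) 2 ≤ μ 2 - (Finsupp.single i 1) 2 := by
        rcases hi with rfl | rfl <;> rcases hj with rfl | rfl <;>
          simp [Finsupp.single_apply] <;> omega
      have hle3 : (Finsupp.single i 1) 3 ≤ μ 3 ∧ (Finsupp.single j 1) 3 ≤ μ 3 - (Finsupp.single i 1) 3 := by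
        rcases hi with rfl | rfl <;> rcases hj with rfl | rfl <;>
          simp [Finsupp.single_apply] <;> omega
      omega
    exact (quadS k).mul_mem (XX_mem_quadS hi hj) (ih μ' hn' hwt' c)

lemma mem_S_of {p : MvPolynomial (Fin 4) k} (h : ∀ μ ∈ p.support, wt μ = 0) : p ∈ quadS k := by
  rw [p.as_sum]
  exact sum_mem (fun μ hμ => mono_S (μ 2 + μ 3) μ rfl (h μ hμ) _)

lemma mul_mem_of {V : Submodule ↥(quadS k) (MvPolynomial (Fin 4) k)}
    {s g : MvPolynomial (Fin 4) k} (hs : s ∈ quadS k) (hg : g ∈ V) : s * g ∈ V := by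
  have : s * g = (⟨s, hs⟩ : ↥(quadS k)) • g := rfl
  rw [this]; exact V.smul_mem _ hg

lemma mono_I {μ : Fin 4 →₀ ℕ} (hw : wt μ = 1) (c : k) : monomial μ c ∈ Imod k := by
  have h0 : (μ 0 : ℤ) + μ 1 - μ 2 - μ 3 = 1 := hw
  obtain ⟨i, hi, hμi⟩ : ∃ i : Fin 4, (i = 0 ∨ i = 1) ∧ 1 ≤ μ i := by
    by_cases hx : 1 ≤ μ 0
    · exact ⟨0, Or.inl rfl, hx⟩
    · exact ⟨1, Or.inr rfl, by omega⟩
  have hwt' : wt (μ - Finsupp.single i 1) = 0 := by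
    rw [wt_sub_single μ i hμi, wt_single_01 hi]; omega
  have heq : monomial μ c = monomial (μ - Finsupp.single i 1) c * X i := by
    rw [show (X i : MvPolynomial (Fin 4) k) = monomial (Finsupp.single i 1) 1 from rfl,
      monomial_mul, mul_one, single_add_cancel μ i hμi]
  have hXi : (X i : MvPolynomial (Fin 4) k) ∈ Imod k := by
    rcases hi with rfl | rfl <;> exact Submodule.subset_span (by simp)
  rw [heq]
  exact mul_mem_of (mono_S _ _ rfl hwt' c) hXi

lemma mono_J {μ : Fin 4 →₀ ℕ} (hw : wt μ = -1) (c : k) : monomial μ c ∈ Jmod k := by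
  have h0 : (μ 0 : ℤ) + μ 1 - μ 2 - μ 3 = -1 := hw
  obtain ⟨i, hi, hμi⟩ : ∃ i : Fin 4, (i = 2 ∨ i = 3) ∧ 1 ≤ μ i := by
    by_cases hx : 1 ≤ μ 2
    · exact ⟨2, Or.inl rfl, hx⟩
    · exact ⟨3, Or.inr rfl, by omega⟩
  have hwt' : wt (μ - Finsupp.single i 1) = 0 := by
    rw [wt_sub_single μ i hμi, wt_single_23 hi]; omega
  have heq : monomial μ c = monomial (μ - Finsupp.single i 1) c * X i := by
    rw [show (X i : MvPolynomial (Fin 4) k) = monomial (Finsupp.single i 1) 1 from rfl,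
      monomial_mul, mul_one, single_add_cancel μ i hμi]
  have hXi : (X i : MvPolynomial (Fin 4) k) ∈ Jmod k := by
    rcases hi with rfl | rfl <;> exact Submodule.subset_span (by simp)
  rw [heq]
  exact mul_mem_of (mono_S _ _ rfl hwt' c) hXi

lemma mono_zS {μ : Fin 4 →₀ ℕ} (hw : wt μ = -1) (h2 : 1 ≤ μ 2) (c : k) :
    monomial μ c ∈ zSmod k := by
  have hwt' : wt (μ - Finsupp.single 2 1) = 0 := by
    rw [wt_sub_single μ 2 h2, wt_single_23 (Or.inl rfl)]; omega
  have heq : monomial μ c = monomial (μ - Finsupp.single 2 1) c * X 2 := by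
    rw [show (X 2 : MvPolynomial (Fin 4) k) = monomial (Finsupp.single 2 1) 1 from rfl,
      monomial_mul, mul_one, single_add_cancel μ 2 h2]
  rw [heq]
  exact mul_mem_of (mono_S _ _ rfl hwt' c) (Submodule.subset_span (by simp))

lemma mono_zI {μ : Fin 4 →₀ ℕ} (hw : wt μ = 0) (h2 : 1 ≤ μ 2) (c : k) :
    monomial μ c ∈ zImod k := by
  have h0 : (μ 0 : ℤ) + μ 1 - μ 2 - μ 3 = 0 := hw
  obtain ⟨i, hi, hμi⟩ : ∃ i : Fin 4, (i = 0 ∨ i = 1) ∧ 1 ≤ μ i := by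
    by_cases hx : 1 ≤ μ 0
    · exact ⟨0, Or.inl rfl, hx⟩
    · exact ⟨1, Or.inr rfl, by omega⟩
  have hne : i ≠ 2 := by rcases hi with rfl | rfl <;> decide
  set μ' := μ - Finsupp.single i 1 - Finsupp.single 2 1 with hμ'
  have hkey : Finsupp.single i 1 + Finsupp.single 2 1 + μ' = μ :=
    single_sub_eq μ i 2 hne hμi h2
  have hwt' : wt μ' = 0 := by
    have := wt_add (Finsupp.single i 1 + Finsupp.single 2 1) μ'
    rw [hkey, wt_add, wt_single_01 hi, wt_single_23 (Or.inl rfl)] at this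
    omega
  have heq : monomial μ c = monomial μ' c * (X i * X 2) := by
    rw [X_mul_X_eq, monomial_mul, mul_one, add_comm μ', hkey]
  have hXi : (X i * X 2 : MvPolynomial (Fin 4) k) ∈ zImod k := by
    rcases hi with rfl | rfl <;> exact Submodule.subset_span (by simp)
  rw [heq]
  exact mul_mem_of (mono_S _ _ rfl hwt' c) hXi

lemma mem_I_of {p : MvPolynomial (Fin 4) k} (h : ∀ μ ∈ p.support, wt μ = 1) : p ∈ Imod k := by
  rw [p.as_sum]
  exact Submodule.sum_mem _ (fun μ hμ => mono_I (h μ hμ) _)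

lemma mem_J_of {p : MvPolynomial (Fin 4) k} (h : ∀ μ ∈ p.support, wt μ = -1) : p ∈ Jmod k := by
  rw [p.as_sum]
  exact Submodule.sum_mem _ (fun μ hμ => mono_J (h μ hμ) _)

lemma mem_zS_of {p : MvPolynomial (Fin 4) k} (h : ∀ μ ∈ p.support, wt μ = -1 ∧ 1 ≤ μ 2) :
    p ∈ zSmod k := by
  rw [p.as_sum]
  exact Submodule.sum_mem _ (fun μ hμ => mono_zS (h μ hμ).1 (h μ hμ).2 _)

lemma mem_zI_of {p : MvPolynomial (Fin 4) k} (h : ∀ μ ∈ p.support, wt μ = 0 ∧ 1 ≤ μ 2) :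
    p ∈ zImod k := by
  rw [p.as_sum]
  exact Submodule.sum_mem _ (fun μ hμ => mono_zI (h μ hμ).1 (h μ hμ).2 _)

lemma zI_sub_R {m : MvPolynomial (Fin 4) k} (hm : m ∈ zImod k) : m ∈ Rset k :=
  ⟨0, m, hm, by simp⟩

lemma mem_R_of {p : MvPolynomial (Fin 4) k}
    (h : ∀ μ ∈ p.support, μ ≠ 0 → wt μ = 0 ∧ 1 ≤ μ 2) : p ∈ Rset k := by
  refine ⟨coeff 0 p, p - C (coeff 0 p), mem_zI_of ?_, ?_⟩
  · intro μ hμ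
    have hc : coeff μ (p - C (coeff 0 p)) ≠ 0 := mem_support_iff.mp hμ
    rw [coeff_sub, coeff_C] at hc
    rcases eq_or_ne μ 0 with rfl | hne
    · simp at hc
    · rw [if_neg (Ne.symm hne), sub_zero] at hc
      exact h μ (mem_support_iff.mpr hc) hne
  · have : (algebraMap k (MvPolynomial (Fin 4) k)) (coeff 0 p) = C (coeff 0 p) := rfl
    rw [this, add_sub_cancel]

lemma eq_mono_mul (ν : Fin 4 →₀ ℕ) (p : MvPolynomial (Fin 4) k)
    (h : ∀ μ ∈ p.support, ν ≤ μ) :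
    ∃ q : MvPolynomial (Fin 4) k, p = monomial ν 1 * q ∧
      ∀ μ ∈ q.support, ν + μ ∈ p.support := by
  refine ⟨p.divMonomial ν, ?_, ?_⟩
  · have hmod : p.modMonomial ν = 0 := by
      ext s'
      by_cases hs : ν ≤ s'
      · rw [coeff_modMonomial_of_le _ hs, coeff_zero]
      · rw [coeff_modMonomial_of_not_le _ hs, coeff_zero]
        by_contra hc
        exact hs (h s' (mem_support_iff.mpr hc))
    conv_lhs => rw [← divMonomial_add_modMonomial p ν]
    rw [hmod, add_zero]
  · intro μ hμ
    have := mem_support_iff.mp hμ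
    rw [coeff_divMonomial] at this
    exact mem_support_iff.mpr this

lemma key_supp {p p' : MvPolynomial (Fin 4) k}
    (h : X 1 * X 2 * p = X 0 * X 2 * p') :
    ∀ μ ∈ p.support, 1 ≤ μ 0 := by
  intro μ hμ
  set ν₁ : Fin 4 →₀ ℕ := Finsupp.single 1 1 + Finsupp.single 2 1 with hν₁
  set ν₂ : Fin 4 →₀ ℕ := Finsupp.single 0 1 + Finsupp.single 2 1 with hν₂
  have h1 : coeff (ν₁ + μ) (X 1 * X 2 * p) = coeff μ p := by
    rw [X_mul_X_eq, ← hν₁, coeff_monomial_mul', if_pos le_self_add, one_mul,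
      add_tsub_cancel_left]
  have h2 : coeff (ν₁ + μ) (X 0 * X 2 * p') =
      if ν₂ ≤ ν₁ + μ then coeff (ν₁ + μ - ν₂) p' else 0 := by
    rw [X_mul_X_eq, ← hν₂, coeff_monomial_mul']
    split_ifs with hle
    · rw [one_mul]
    · rfl
  rw [h, h2] at h1
  by_cases hle : ν₂ ≤ ν₁ + μ
  · have := Finsupp.le_def.mp hle 0
    simp only [hν₁, hν₂, Finsupp.add_apply, Finsupp.single_apply] at this
    simpa using this
  · rw [if_neg hle] at h1
    exact absurd h1.symm (mem_support_iff.mp hμ)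

lemma colA {p p' : MvPolynomial (Fin 4) k}
    (h : X 1 * X 2 * p = X 0 * X 2 * p')
    (hp : ∀ μ ∈ p.support, wt μ = 0 ∧ 1 ≤ μ 2) :
    ∃ s ∈ quadS k, p = (X 0 * X 2) * s := by
  have h0 := key_supp h
  have hle : ∀ μ ∈ p.support, (Finsupp.single (0:Fin 4) 1 + Finsupp.single (2:Fin 4) 1) ≤ μ := by
    intro μ hμ
    rw [Finsupp.le_def]
    intro a
    have := h0 μ hμ
    have := (hp μ hμ).2
    fin_cases a <;> simp [Finsupp.add_apply, Finsupp.single_apply] <;> omega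
  obtain ⟨q, hq, hsupp⟩ := eq_mono_mul _ p hle
  refine ⟨q, mem_S_of ?_, by rw [hq, X_mul_X_eq]⟩
  intro μ hμ
  have hw := (hp _ (hsupp μ hμ)).1
  rw [wt_add] at hw
  have : wt (Finsupp.single (0:Fin 4) 1 + Finsupp.single (2:Fin 4) 1) = 0 := by
    rw [wt_add, wt_single_01 (Or.inl rfl), wt_single_23 (Or.inl rfl)]; omega
  omega

lemma colA1 {p p' : MvPolynomial (Fin 4) k}
    (h : X 1 * X 2 * p = X 0 * X 2 * p')
    (hp : ∀ μ ∈ p.support, wt μ = -1 ∧ 1 ≤ μ 2) :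
    ∃ s, s ∈ Jmod k ∧ p = (X 0 * X 2) * s := by
  have h0 := key_supp h
  have hle : ∀ μ ∈ p.support, (Finsupp.single (0:Fin 4) 1 + Finsupp.single (2:Fin 4) 1) ≤ μ := by
    intro μ hμ
    rw [Finsupp.le_def]
    intro a
    have := h0 μ hμ
    have := (hp μ hμ).2
    fin_cases a <;> simp [Finsupp.add_apply, Finsupp.single_apply] <;> omega
  obtain ⟨q, hq, hsupp⟩ := eq_mono_mul _ p hle
  refine ⟨q, mem_J_of ?_, by rw [hq, X_mul_X_eq]⟩
  intro μ hμ
  have hw := (hp _ (hsupp μ hμ)).1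
  rw [wt_add] at hw
  have : wt (Finsupp.single (0:Fin 4) 1 + Finsupp.single (2:Fin 4) 1) = 0 := by
    rw [wt_add, wt_single_01 (Or.inl rfl), wt_single_23 (Or.inl rfl)]; omega
  omega

lemma R_to_zI {p : MvPolynomial (Fin 4) k} (hp : p ∈ Rset k)
    (h0 : ∀ μ ∈ p.support, 1 ≤ μ 0) :
    ∀ μ ∈ p.support, wt μ = 0 ∧ 1 ≤ μ 2 := by
  intro μ hμ
  refine hRs hp μ hμ (fun hz => ?_)
  have := h0 μ hμ
  rw [hz] at this
  simp at this

lemma zdiv {p : MvPolynomial (Fin 4) k} (c : ℤ)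
    (hp : ∀ μ ∈ p.support, wt μ = c ∧ 1 ≤ μ 2) :
    ∃ q, (∀ μ ∈ q.support, wt μ = c + 1) ∧ p = X 2 * q := by
  have hle : ∀ μ ∈ p.support, (Finsupp.single (2:Fin 4) 1) ≤ μ := by
    intro μ hμ
    exact Finsupp.single_le_iff.mpr (hp μ hμ).2
  obtain ⟨q, hq, hsupp⟩ := eq_mono_mul _ p hle
  refine ⟨q, ?_, by rw [hq]; rfl⟩
  intro μ hμ
  have hw := (hp _ (hsupp μ hμ)).1
  rw [wt_add, wt_single_23 (Or.inl rfl)] at hw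
  omega

lemma colC1 {p : MvPolynomial (Fin 4) k} (hp : p ∈ Rset k)
    (h2 : (X 0 * X 3) * p ∈ Rset k) :
    ∀ μ ∈ p.support, wt μ = 0 ∧ 1 ≤ μ 2 := by
  intro μ hμ
  refine hRs hp μ hμ (fun hz => ?_)
  subst hz
  set ν : Fin 4 →₀ ℕ := Finsupp.single 0 1 + Finsupp.single 3 1 with hν
  have hco : coeff ν ((X 0 * X 3) * p) = coeff 0 p := by
    rw [X_mul_X_eq, coeff_monomial_mul', ← hν, if_pos le_rfl, tsub_self, one_mul]
  have hmem : ν ∈ ((X 0 * X 3) * p).support := by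
    rw [mem_support_iff, hco]
    exact mem_support_iff.mp hμ
  have hne : ν ≠ 0 := by
    intro hc
    have := DFunLike.congr_fun hc (0 : Fin 4)
    simp [hν, Finsupp.add_apply, Finsupp.single_apply] at this
  have := (hRs h2 ν hmem hne).2
  simp [hν, Finsupp.add_apply, Finsupp.single_apply] at this

lemma I_mul_zS {a b : MvPolynomial (Fin 4) k} (ha : a ∈ Imod k) (hb : b ∈ zSmod k) :
    a * b ∈ zImod k := by
  refine mem_zI_of (supp_mul_cond (hI ha) (hzS hb) ?_)
  intro x y hx hy
  constructor
  · rw [wt_add]; omega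
  · rw [Finsupp.add_apply]; omega

lemma zI_mul_R {a b : MvPolynomial (Fin 4) k} (ha : a ∈ zImod k) (hb : b ∈ Rset k) :
    a * b ∈ zImod k := by
  refine mem_zI_of (supp_mul_cond (hzI ha) (hRs hb) ?_)
  intro x y hx hy
  rcases eq_or_ne y 0 with rfl | hy0
  · rw [add_zero]; exact hx
  · obtain ⟨hy1, hy2⟩ := hy hy0
    constructor
    · rw [wt_add]; omega
    · rw [Finsupp.add_apply]; omega

lemma J_mul_zI {a b : MvPolynomial (Fin 4) k} (ha : a ∈ Jmod k) (hb : b ∈ zImod k) :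
    a * b ∈ zSmod k := by
  refine mem_zS_of (supp_mul_cond (hJ ha) (hzI hb) ?_)
  intro x y hx hy
  constructor
  · rw [wt_add]; omega
  · rw [Finsupp.add_apply]; omega

lemma zS_mul_R {a b : MvPolynomial (Fin 4) k} (ha : a ∈ zSmod k) (hb : b ∈ Rset k) :
    a * b ∈ zSmod k := by
  refine mem_zS_of (supp_mul_cond (hzS ha) (hRs hb) ?_)
  intro x y hx hy
  rcases eq_or_ne y 0 with rfl | hy0
  · rw [add_zero]; exact hx
  · obtain ⟨hy1, hy2⟩ := hy hy0
    constructor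
    · rw [wt_add]; omega
    · rw [Finsupp.add_apply]; omega

lemma R_mul_R {a b : MvPolynomial (Fin 4) k} (ha : a ∈ Rset k) (hb : b ∈ Rset k) :
    a * b ∈ Rset k := by
  refine mem_R_of ?_
  have := supp_mul_cond (hRs ha) (hRs hb)
    (R := fun μ => μ ≠ 0 → wt μ = 0 ∧ 1 ≤ μ 2) ?_
  · exact this
  intro x y hx hy hne
  rcases eq_or_ne x 0 with rfl | hx0
  · rw [zero_add] at hne ⊢
    exact hy hne
  · rcases eq_or_ne y 0 with rfl | hy0
    · rw [add_zero]
      exact hx hx0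
    · obtain ⟨h1, h2⟩ := hx hx0
      obtain ⟨h3, h4⟩ := hy hy0
      constructor
      · rw [wt_add]; omega
      · rw [Finsupp.add_apply]; omega

lemma R_add_R {a b : MvPolynomial (Fin 4) k} (ha : a ∈ Rset k) (hb : b ∈ Rset k) :
    a + b ∈ Rset k := by
  obtain ⟨c, m, hm, rfl⟩ := ha
  obtain ⟨c', m', hm', rfl⟩ := hb
  exact ⟨c + c', m + m', (zImod k).add_mem hm hm', by rw [map_add]; ring⟩

lemma R_zero : (0 : MvPolynomial (Fin 4) k) ∈ Rset k := ⟨0, 0, (zImod k).zero_mem, by simp⟩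

lemma R_one : (1 : MvPolynomial (Fin 4) k) ∈ Rset k := ⟨1, 0, (zImod k).zero_mem, by simp⟩

section Main
variable {𝒜 : Subalgebra k (Matrix (Fin 3) (Fin 3) (MvPolynomial (Fin 4) k))}
  {R : Subalgebra k (MvPolynomial (Fin 4) k)}
  {N : Submodule ↥R (Fin 3 → MvPolynomial (Fin 4) k)}

lemma hmemA (h𝒜 : (𝒜 : Set (Matrix (Fin 3) (Fin 3) (MvPolynomial (Fin 4) k))) = A3set k) :
    ∀ M : Matrix (Fin 3) (Fin 3) (MvPolynomial (Fin 4) k),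
    M ∈ 𝒜 ↔ M ∈ A3set k := fun M => by rw [← h𝒜]; exact Iff.rfl

lemma hmemN (hN : (N : Set (Fin 3 → MvPolynomial (Fin 4) k)) = Ae3set k) :
    ∀ v : Fin 3 → MvPolynomial (Fin 4) k,
    v ∈ N ↔ v ∈ Ae3set k := fun v => by rw [← hN]; exact Iff.rfl

lemma hmemR (hR : (R : Set (MvPolynomial (Fin 4) k)) = Rset k) :
    ∀ a : MvPolynomial (Fin 4) k, a ∈ R ↔ a ∈ Rset k :=
  fun a => by rw [← hR]; exact Iff.rfl

lemma hwd : ∀ M : Matrix (Fin 3) (Fin 3) (MvPolynomial (Fin 4) k), M ∈ A3set k →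
    ∀ v ∈ Ae3set k, M.mulVec v ∈ Ae3set k := by
  rintro M ⟨hM00, hM01, hM02, hM10, hM11, hM12, hM20, hM21, hM22⟩ v ⟨hv0, hv1, hv2⟩
  have hmv : ∀ i, M.mulVec v i = M i 0 * v 0 + (M i 1 * v 1 + M i 2 * v 2) := by
    intro i
    simp [Matrix.mulVec, dotProduct, Fin.sum_univ_three, add_assoc]
  refine ⟨?_, ?_, ?_⟩
  · rw [hmv 0]
    exact (zImod k).add_mem (mul_mem_of hM00 hv0)
      ((zImod k).add_mem (I_mul_zS hM01 hv1) (zI_mul_R hM02 hv2))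
  · rw [hmv 1]
    exact (zSmod k).add_mem (J_mul_zI hM10 hv0)
      ((zSmod k).add_mem (mul_mem_of hM11 hv1) (zS_mul_R hM12 hv2))
  · rw [hmv 2]
    exact R_add_R (zI_sub_R (mul_mem_of hM20 hv0))
      (R_add_R (zI_sub_R (I_mul_zS hM21 hv1)) (R_mul_R hM22 hv2))

/-- left multiplication as an endomorphism -/
def phiEnd (h𝒜 : (𝒜 : Set (Matrix (Fin 3) (Fin 3) (MvPolynomial (Fin 4) k))) = A3set k)
    (hN : (N : Set (Fin 3 → MvPolynomial (Fin 4) k)) = Ae3set k)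
    (M : ↥𝒜) : Module.End ↥R ↥N where
  toFun := fun v => ⟨(M : Matrix (Fin 3) (Fin 3) (MvPolynomial (Fin 4) k)).mulVec ↑v,
    (hmemN hN _).mpr (hwd _ ((hmemA h𝒜 _).mp M.2) _ ((hmemN hN _).mp v.2))⟩
  map_add' := fun v w => by
    apply Subtype.ext
    show (M : Matrix (Fin 3) (Fin 3) (MvPolynomial (Fin 4) k)).mulVec ↑(v + w) = _
    rw [Submodule.coe_add, Matrix.mulVec_add]
    rfl
  map_smul' := fun r v => by
    apply Subtype.ext
    show (M : Matrix (Fin 3) (Fin 3) (MvPolynomial (Fin 4) k)).mulVec ↑(r • v) = _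
    have h1 : ((r • v : ↥N) : Fin 3 → MvPolynomial (Fin 4) k)
        = (r : MvPolynomial (Fin 4) k) • (v : Fin 3 → MvPolynomial (Fin 4) k) := rfl
    rw [h1, Matrix.mulVec_smul]
    rfl

lemma phiEnd_coe (h𝒜 : (𝒜 : Set (Matrix (Fin 3) (Fin 3) (MvPolynomial (Fin 4) k))) = A3set k)
    (hN : (N : Set (Fin 3 → MvPolynomial (Fin 4) k)) = Ae3set k) (M : ↥𝒜) (v : ↥N) :
    ((phiEnd h𝒜 hN M v : ↥N) : Fin 3 → MvPolynomial (Fin 4) k)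
      = (M : Matrix (Fin 3) (Fin 3) (MvPolynomial (Fin 4) k)).mulVec ↑v := rfl

lemma phiEnd_one (h𝒜 : (𝒜 : Set (Matrix (Fin 3) (Fin 3) (MvPolynomial (Fin 4) k))) = A3set k)
    (hN : (N : Set (Fin 3 → MvPolynomial (Fin 4) k)) = Ae3set k) :
    phiEnd h𝒜 hN (1 : ↥𝒜) = 1 := by
  apply LinearMap.ext; intro v; apply Subtype.ext
  rw [show ((1 : Module.End ↥R ↥N) v : Fin 3 → MvPolynomial (Fin 4) k) = ↑v from rfl,
    phiEnd_coe, OneMemClass.coe_one, Matrix.one_mulVec]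

lemma phiEnd_mul (h𝒜 : (𝒜 : Set (Matrix (Fin 3) (Fin 3) (MvPolynomial (Fin 4) k))) = A3set k)
    (hN : (N : Set (Fin 3 → MvPolynomial (Fin 4) k)) = Ae3set k) (M M' : ↥𝒜) :
    phiEnd h𝒜 hN (M * M') = phiEnd h𝒜 hN M * phiEnd h𝒜 hN M' := by
  apply LinearMap.ext; intro v; apply Subtype.ext
  rw [Module.End.mul_apply, phiEnd_coe, phiEnd_coe, phiEnd_coe, MulMemClass.coe_mul,
    ← Matrix.mulVec_mulVec]

lemma phiEnd_zero (h𝒜 : (𝒜 : Set (Matrix (Fin 3) (Fin 3) (MvPolynomial (Fin 4) k))) = A3set k)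
    (hN : (N : Set (Fin 3 → MvPolynomial (Fin 4) k)) = Ae3set k) :
    phiEnd h𝒜 hN (0 : ↥𝒜) = 0 := by
  apply LinearMap.ext; intro v; apply Subtype.ext
  rw [show ((0 : Module.End ↥R ↥N) v : Fin 3 → MvPolynomial (Fin 4) k) = 0 from rfl,
    phiEnd_coe, ZeroMemClass.coe_zero, Matrix.zero_mulVec]

lemma phiEnd_add (h𝒜 : (𝒜 : Set (Matrix (Fin 3) (Fin 3) (MvPolynomial (Fin 4) k))) = A3set k)
    (hN : (N : Set (Fin 3 → MvPolynomial (Fin 4) k)) = Ae3set k) (M M' : ↥𝒜) :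
    phiEnd h𝒜 hN (M + M') = phiEnd h𝒜 hN M + phiEnd h𝒜 hN M' := by
  apply LinearMap.ext; intro v; apply Subtype.ext
  rw [LinearMap.add_apply, Submodule.coe_add, phiEnd_coe, phiEnd_coe, phiEnd_coe,
    AddMemClass.coe_add, Matrix.add_mulVec]

lemma phiEnd_commutes (h𝒜 : (𝒜 : Set (Matrix (Fin 3) (Fin 3) (MvPolynomial (Fin 4) k))) = A3set k)
    (hN : (N : Set (Fin 3 → MvPolynomial (Fin 4) k)) = Ae3set k) (c : k) :
    phiEnd h𝒜 hN (algebraMap k ↥𝒜 c) = algebraMap k (Module.End ↥R ↥N) c := by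
  apply LinearMap.ext; intro v; apply Subtype.ext
  rw [phiEnd_coe, Module.algebraMap_end_apply, Submodule.coe_smul_of_tower,
    show ((algebraMap k ↥𝒜 c : ↥𝒜) : Matrix (Fin 3) (Fin 3) (MvPolynomial (Fin 4) k))
      = algebraMap k (Matrix (Fin 3) (Fin 3) (MvPolynomial (Fin 4) k)) c from rfl,
    Algebra.algebraMap_eq_smul_one, Matrix.smul_mulVec, Matrix.one_mulVec]

/-- the algebra homomorphism -/
def phiAlg (h𝒜 : (𝒜 : Set (Matrix (Fin 3) (Fin 3) (MvPolynomial (Fin 4) k))) = A3set k)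
    (hN : (N : Set (Fin 3 → MvPolynomial (Fin 4) k)) = Ae3set k) :
    ↥𝒜 →ₐ[k] Module.End ↥R ↥N where
  toFun := phiEnd h𝒜 hN
  map_one' := phiEnd_one h𝒜 hN
  map_mul' := phiEnd_mul h𝒜 hN
  map_zero' := phiEnd_zero h𝒜 hN
  map_add' := phiEnd_add h𝒜 hN
  commutes' := phiEnd_commutes h𝒜 hN

lemma phiAlg_coe (h𝒜 : (𝒜 : Set (Matrix (Fin 3) (Fin 3) (MvPolynomial (Fin 4) k))) = A3set k)
    (hN : (N : Set (Fin 3 → MvPolynomial (Fin 4) k)) = Ae3set k) (M : ↥𝒜) (v : ↥N) :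
    ((phiAlg h𝒜 hN M v : ↥N) : Fin 3 → MvPolynomial (Fin 4) k)
      = (M : Matrix (Fin 3) (Fin 3) (MvPolynomial (Fin 4) k)).mulVec ↑v := rfl

lemma xz_mem_zI : (X 0 * X 2 : MvPolynomial (Fin 4) k) ∈ zImod k :=
  Submodule.subset_span (Or.inl rfl)

lemma yz_mem_zI : (X 1 * X 2 : MvPolynomial (Fin 4) k) ∈ zImod k :=
  Submodule.subset_span (Or.inr rfl)

lemma z_mem_zS : (X 2 : MvPolynomial (Fin 4) k) ∈ zSmod k :=
  Submodule.subset_span rfl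

lemma hxz_ne : (X 0 * X 2 : MvPolynomial (Fin 4) k) ≠ 0 :=
  mul_ne_zero (X_ne_zero _) (X_ne_zero _)

lemma single0_mem {a : MvPolynomial (Fin 4) k} (ha : a ∈ zImod k) :
    Pi.single (0 : Fin 3) a ∈ Ae3set k := by
  refine ⟨?_, ?_, ?_⟩
  · rw [Pi.single_eq_same]; exact ha
  · rw [Pi.single_eq_of_ne (by decide)]; exact (zSmod k).zero_mem
  · rw [Pi.single_eq_of_ne (by decide)]; exact R_zero

lemma single1_mem {a : MvPolynomial (Fin 4) k} (ha : a ∈ zSmod k) :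
    Pi.single (1 : Fin 3) a ∈ Ae3set k := by
  refine ⟨?_, ?_, ?_⟩
  · rw [Pi.single_eq_of_ne (by decide)]; exact (zImod k).zero_mem
  · rw [Pi.single_eq_same]; exact ha
  · rw [Pi.single_eq_of_ne (by decide)]; exact R_zero

lemma single2_mem {a : MvPolynomial (Fin 4) k} (ha : a ∈ Rset k) :
    Pi.single (2 : Fin 3) a ∈ Ae3set k := by
  refine ⟨?_, ?_, ?_⟩
  · rw [Pi.single_eq_of_ne (by decide)]; exact (zImod k).zero_mem
  · rw [Pi.single_eq_of_ne (by decide)]; exact (zSmod k).zero_mem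
  · rw [Pi.single_eq_same]; exact ha

lemma phiAlg_inj (h𝒜 : (𝒜 : Set (Matrix (Fin 3) (Fin 3) (MvPolynomial (Fin 4) k))) = A3set k)
    (hN : (N : Set (Fin 3 → MvPolynomial (Fin 4) k)) = Ae3set k) :
    Function.Injective (phiAlg (k := k) (𝒜 := 𝒜) (R := R) (N := N) h𝒜 hN) := by
  intro M M' h
  have htest : ∀ (j : Fin 3) (c : MvPolynomial (Fin 4) k), Pi.single j c ∈ Ae3set k →
      ∀ i, (M : Matrix (Fin 3) (Fin 3) (MvPolynomial (Fin 4) k)) i j * c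
        = (M' : Matrix (Fin 3) (Fin 3) (MvPolynomial (Fin 4) k)) i j * c := by
    intro j c hc i
    have hv : Pi.single j c ∈ N := (hmemN hN _).mpr hc
    have h1 := congrArg (fun g : Module.End ↥R ↥N =>
      ((g ⟨Pi.single j c, hv⟩ : ↥N) : Fin 3 → MvPolynomial (Fin 4) k)) h
    simp only [phiAlg_coe] at h1
    rw [Matrix.mulVec_single, Matrix.mulVec_single] at h1
    exact congrFun h1 i
  apply Subtype.ext
  funext i j
  fin_cases j
  · exact mul_right_cancel₀ hxz_ne (htest 0 (X 0 * X 2) (single0_mem xz_mem_zI) i)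
  · exact mul_right_cancel₀ (X_ne_zero _) (htest 1 (X 2) (single1_mem z_mem_zS) i)
  · exact mul_right_cancel₀ one_ne_zero (htest 2 1 (single2_mem R_one) i)

lemma phiAlg_surj (h𝒜 : (𝒜 : Set (Matrix (Fin 3) (Fin 3) (MvPolynomial (Fin 4) k))) = A3set k)
    (hR : (R : Set (MvPolynomial (Fin 4) k)) = Rset k)
    (hN : (N : Set (Fin 3 → MvPolynomial (Fin 4) k)) = Ae3set k) :
    Function.Surjective (phiAlg (k := k) (𝒜 := 𝒜) (R := R) (N := N) h𝒜 hN) := by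
  intro f
  have hfm : ∀ v : ↥N, ((f v : ↥N) : Fin 3 → MvPolynomial (Fin 4) k) ∈ Ae3set k :=
    fun v => (hmemN hN _).mp (f v).2
  have hcross : ∀ (r₁ r₂ : MvPolynomial (Fin 4) k), r₁ ∈ Rset k → r₂ ∈ Rset k →
      ∀ (n m : ↥N),
      (∀ j, r₁ * (↑n : Fin 3 → MvPolynomial (Fin 4) k) j
          = r₂ * (↑m : Fin 3 → MvPolynomial (Fin 4) k) j) →
      ∀ i, r₁ * (↑(f n) : Fin 3 → MvPolynomial (Fin 4) k) i
          = r₂ * (↑(f m) : Fin 3 → MvPolynomial (Fin 4) k) i := by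
    intro r₁ r₂ hr₁ hr₂ n m hnm i
    have h1 : (⟨r₁, (hmemR hR _).mpr hr₁⟩ : ↥R) • n = (⟨r₂, (hmemR hR _).mpr hr₂⟩ : ↥R) • m := by
      apply Subtype.ext
      funext j
      exact hnm j
    have h2 : (⟨r₁, (hmemR hR _).mpr hr₁⟩ : ↥R) • f n
        = (⟨r₂, (hmemR hR _).mpr hr₂⟩ : ↥R) • f m := by
      rw [← map_smul, ← map_smul, h1]
    exact congrFun (congrArg Subtype.val h2) i
  -- test vectors
  let u1 : ↥N := ⟨Pi.single 0 (X 0 * X 2), (hmemN hN _).mpr (single0_mem xz_mem_zI)⟩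
  let u1' : ↥N := ⟨Pi.single 0 (X 1 * X 2), (hmemN hN _).mpr (single0_mem yz_mem_zI)⟩
  let u2 : ↥N := ⟨Pi.single 1 (X 2), (hmemN hN _).mpr (single1_mem z_mem_zS)⟩
  let b1 : ↥N := ⟨Pi.single 1 ((X 0 * X 3) * X 2),
    (hmemN hN _).mpr (single1_mem (mul_mem_of (XX_mem_quadS (Or.inl rfl) (Or.inr rfl)) z_mem_zS))⟩
  let u3 : ↥N := ⟨Pi.single 2 1, (hmemN hN _).mpr (single2_mem R_one)⟩
  have hu1c : (↑u1 : Fin 3 → MvPolynomial (Fin 4) k)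
      = Pi.single (0:Fin 3) (X 0 * X 2 : MvPolynomial (Fin 4) k) := rfl
  have hu1'c : (↑u1' : Fin 3 → MvPolynomial (Fin 4) k)
      = Pi.single (0:Fin 3) (X 1 * X 2 : MvPolynomial (Fin 4) k) := rfl
  have hu2c : (↑u2 : Fin 3 → MvPolynomial (Fin 4) k)
      = Pi.single (1:Fin 3) (X 2 : MvPolynomial (Fin 4) k) := rfl
  have hb1c : (↑b1 : Fin 3 → MvPolynomial (Fin 4) k)
      = Pi.single (1:Fin 3) ((X 0 * X 3) * X 2 : MvPolynomial (Fin 4) k) := rfl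
  have hu3c : (↑u3 : Fin 3 → MvPolynomial (Fin 4) k)
      = Pi.single (2:Fin 3) (1 : MvPolynomial (Fin 4) k) := rfl
  -- column 0
  have hcr1 : ∀ i, (X 1 * X 2) * (↑(f u1) : Fin 3 → MvPolynomial (Fin 4) k) i
      = (X 0 * X 2) * (↑(f u1') : Fin 3 → MvPolynomial (Fin 4) k) i := by
    refine hcross (X 1 * X 2) (X 0 * X 2) (zI_sub_R yz_mem_zI) (zI_sub_R xz_mem_zI) u1 u1' ?_
    intro j
    rw [hu1c, hu1'c]
    fin_cases j <;> simp [Pi.single_apply] <;> ring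
  obtain ⟨s00, hs00, e00⟩ := colA (hcr1 0) (hzI (hfm u1).1)
  obtain ⟨s10, hs10, e10⟩ := colA1 (hcr1 1) (hzS (hfm u1).2.1)
  obtain ⟨s20, hs20, e20⟩ := colA (hcr1 2) (R_to_zI (hfm u1).2.2 (key_supp (hcr1 2)))
  -- column 1
  have hcr2 : ∀ i, ((X 0 * X 3) * (X 0 * X 2)) * (↑(f u2) : Fin 3 → MvPolynomial (Fin 4) k) i
      = (X 0 * X 2) * (↑(f b1) : Fin 3 → MvPolynomial (Fin 4) k) i := by
    refine hcross _ _
      (zI_sub_R (mul_mem_of (XX_mem_quadS (Or.inl rfl) (Or.inr rfl)) xz_mem_zI))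
      (zI_sub_R xz_mem_zI) u2 b1 ?_
    intro j
    rw [hu2c, hb1c]
    fin_cases j <;> simp [Pi.single_apply] <;> ring
  have hxw2 : ∀ i, (X 0 * X 3) * (↑(f u2) : Fin 3 → MvPolynomial (Fin 4) k) i
      = (↑(f b1) : Fin 3 → MvPolynomial (Fin 4) k) i := by
    intro i
    have h' : (X 0 * X 2) * ((X 0 * X 3) * (↑(f u2) : Fin 3 → MvPolynomial (Fin 4) k) i)
        = (X 0 * X 2) * (↑(f b1) : Fin 3 → MvPolynomial (Fin 4) k) i := by
      rw [← hcr2 i]; ring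
    exact mul_left_cancel₀ hxz_ne h'
  obtain ⟨q01, hq01wt, e01⟩ := zdiv 0 (hzI (hfm u2).1)
  obtain ⟨q11, hq11wt, e11⟩ := zdiv (-1) (hzS (hfm u2).2.1)
  obtain ⟨q21, hq21wt, e21⟩ := zdiv 0 (colC1 (hfm u2).2.2 (by rw [hxw2 2]; exact (hfm b1).2.2))
  -- the matrix
  set Mmat : Matrix (Fin 3) (Fin 3) (MvPolynomial (Fin 4) k) :=
    ![![s00, q01, (↑(f u3) : Fin 3 → MvPolynomial (Fin 4) k) 0],
      ![s10, q11, (↑(f u3) : Fin 3 → MvPolynomial (Fin 4) k) 1],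
      ![s20, q21, (↑(f u3) : Fin 3 → MvPolynomial (Fin 4) k) 2]] with hMmat
  have hq01I : q01 ∈ Imod k := mem_I_of (fun μ hμ => by have := hq01wt μ hμ; omega)
  have hq11S : q11 ∈ quadS k := mem_S_of (fun μ hμ => by have := hq11wt μ hμ; omega)
  have hq21I : q21 ∈ Imod k := mem_I_of (fun μ hμ => by have := hq21wt μ hμ; omega)
  have hMA : Mmat ∈ 𝒜 := (hmemA h𝒜 _).mpr
    ⟨hs00, hq01I, (hfm u3).1, hs10, hq11S, (hfm u3).2.1, hs20, hq21I, (hfm u3).2.2⟩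
  have hC0 : ∀ i, (↑(f u1) : Fin 3 → MvPolynomial (Fin 4) k) i = (X 0 * X 2) * Mmat i 0 := by
    intro i; fin_cases i
    exacts [e00, e10, e20]
  have hC1 : ∀ i, (↑(f u2) : Fin 3 → MvPolynomial (Fin 4) k) i = X 2 * Mmat i 1 := by
    intro i; fin_cases i
    exacts [e01, e11, e21]
  have hC2 : ∀ i, (↑(f u3) : Fin 3 → MvPolynomial (Fin 4) k) i = Mmat i 2 := by
    intro i; fin_cases i
    exacts [rfl, rfl, rfl]
  -- general column identities
  have hgen0 : ∀ (a : MvPolynomial (Fin 4) k), a ∈ zImod k → ∀ (n : ↥N),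
      (↑n : Fin 3 → MvPolynomial (Fin 4) k) = Pi.single (0:Fin 3) a →
      ∀ i, (↑(f n) : Fin 3 → MvPolynomial (Fin 4) k) i = Mmat i 0 * a := by
    intro a ha n hna i
    have hxw : (X 0 * X 3 : MvPolynomial (Fin 4) k) ∈ quadS k :=
      XX_mem_quadS (Or.inl rfl) (Or.inr rfl)
    have hcr := hcross ((X 0 * X 3) * (X 0 * X 2)) ((X 0 * X 3) * a)
      (zI_sub_R (mul_mem_of hxw xz_mem_zI)) (zI_sub_R (mul_mem_of hxw ha)) n u1
      (by
        intro j
        rw [hna, hu1c]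
        fin_cases j <;> simp [Pi.single_apply] <;> ring) i
    rw [hC0 i] at hcr
    have hne : ((X 0 * X 3) * (X 0 * X 2) : MvPolynomial (Fin 4) k) ≠ 0 :=
      mul_ne_zero (mul_ne_zero (X_ne_zero _) (X_ne_zero _)) hxz_ne
    apply mul_left_cancel₀ hne
    rw [hcr]; ring
  have hgen1 : ∀ (a : MvPolynomial (Fin 4) k), a ∈ zSmod k → ∀ (n : ↥N),
      (↑n : Fin 3 → MvPolynomial (Fin 4) k) = Pi.single (1:Fin 3) a →
      ∀ i, (↑(f n) : Fin 3 → MvPolynomial (Fin 4) k) i = Mmat i 1 * a := by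
    intro a ha n hna i
    have hX0I : (X 0 : MvPolynomial (Fin 4) k) ∈ Imod k := Submodule.subset_span (by simp)
    have hcr := hcross (X 0 * X 2) (X 0 * a)
      (zI_sub_R xz_mem_zI) (zI_sub_R (I_mul_zS hX0I ha)) n u2
      (by
        intro j
        rw [hna, hu2c]
        fin_cases j <;> simp [Pi.single_apply] <;> ring) i
    rw [hC1 i] at hcr
    apply mul_left_cancel₀ hxz_ne
    rw [hcr]; ring
  have hgen2 : ∀ (a : MvPolynomial (Fin 4) k), a ∈ Rset k → ∀ (n : ↥N),
      (↑n : Fin 3 → MvPolynomial (Fin 4) k) = Pi.single (2:Fin 3) a →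
      ∀ i, (↑(f n) : Fin 3 → MvPolynomial (Fin 4) k) i = Mmat i 2 * a := by
    intro a ha n hna i
    have hcr := hcross 1 a R_one ha n u3
      (by
        intro j
        rw [hna, hu3c]
        fin_cases j <;> simp [Pi.single_apply]) i
    rw [hC2 i, one_mul] at hcr
    rw [hcr, mul_comm]
  -- conclusion
  refine ⟨⟨Mmat, hMA⟩, ?_⟩
  apply LinearMap.ext; intro v; apply Subtype.ext
  rw [phiAlg_coe]
  have hv0 : (↑v : Fin 3 → MvPolynomial (Fin 4) k) 0 ∈ zImod k := ((hmemN hN _).mp v.2).1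
  have hv1 : (↑v : Fin 3 → MvPolynomial (Fin 4) k) 1 ∈ zSmod k := ((hmemN hN _).mp v.2).2.1
  have hv2 : (↑v : Fin 3 → MvPolynomial (Fin 4) k) 2 ∈ Rset k := ((hmemN hN _).mp v.2).2.2
  let n0 : ↥N := ⟨Pi.single 0 ((↑v : Fin 3 → MvPolynomial (Fin 4) k) 0),
    (hmemN hN _).mpr (single0_mem hv0)⟩
  let n1 : ↥N := ⟨Pi.single 1 ((↑v : Fin 3 → MvPolynomial (Fin 4) k) 1),
    (hmemN hN _).mpr (single1_mem hv1)⟩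
  let n2 : ↥N := ⟨Pi.single 2 ((↑v : Fin 3 → MvPolynomial (Fin 4) k) 2),
    (hmemN hN _).mpr (single2_mem hv2)⟩
  have hn0c : (↑n0 : Fin 3 → MvPolynomial (Fin 4) k)
      = Pi.single (0:Fin 3) ((↑v : Fin 3 → MvPolynomial (Fin 4) k) 0) := rfl
  have hn1c : (↑n1 : Fin 3 → MvPolynomial (Fin 4) k)
      = Pi.single (1:Fin 3) ((↑v : Fin 3 → MvPolynomial (Fin 4) k) 1) := rfl
  have hn2c : (↑n2 : Fin 3 → MvPolynomial (Fin 4) k)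
      = Pi.single (2:Fin 3) ((↑v : Fin 3 → MvPolynomial (Fin 4) k) 2) := rfl
  have hvv : (↑v : Fin 3 → MvPolynomial (Fin 4) k)
      = Pi.single (0:Fin 3) ((↑v : Fin 3 → MvPolynomial (Fin 4) k) 0)
        + (Pi.single (1:Fin 3) ((↑v : Fin 3 → MvPolynomial (Fin 4) k) 1)
          + Pi.single (2:Fin 3) ((↑v : Fin 3 → MvPolynomial (Fin 4) k) 2)) := by
    funext j
    fin_cases j <;> simp [Pi.single_apply]
  have hvsum : v = n0 + (n1 + n2) := by
    apply Subtype.ext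
    rw [Submodule.coe_add, Submodule.coe_add, hn0c, hn1c, hn2c]
    exact hvv
  have hfv : (↑(f v) : Fin 3 → MvPolynomial (Fin 4) k)
      = (↑(f n0) : Fin 3 → MvPolynomial (Fin 4) k)
        + ((↑(f n1) : Fin 3 → MvPolynomial (Fin 4) k)
          + (↑(f n2) : Fin 3 → MvPolynomial (Fin 4) k)) := by
    rw [hvsum, map_add, map_add, Submodule.coe_add, Submodule.coe_add]
  rw [hfv]
  funext i
  rw [Pi.add_apply, Pi.add_apply, hgen0 _ hv0 n0 hn0c i, hgen1 _ hv1 n1 hn1c i,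
    hgen2 _ hv2 n2 hn2c i, hvv, Matrix.mulVec_add, Matrix.mulVec_add, Matrix.mulVec_single,
    Matrix.mulVec_single, Matrix.mulVec_single]
  simp
  ring

end Main


end A3aux

/-- with `A` the tiled matrix algebra `[[S, I, zI], [J, S, zS], [S, I, R]]`
and `Ae₃` the left `A`-module of column vectors `(zI, zS, R)ᵀ`, viewed as an `R`-module,
the `k`-algebra homomorphism `A → End_R(Ae₃)` sending `a` to left multiplication by `a`
is an isomorphism. -/
theorem A3_iso_End (k : Type*) [Field k]
    (𝒜 : Subalgebra k (Matrix (Fin 3) (Fin 3) (MvPolynomial (Fin 4) k)))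
    (h𝒜 : (𝒜 : Set (Matrix (Fin 3) (Fin 3) (MvPolynomial (Fin 4) k))) = A3set k)
    (R : Subalgebra k (MvPolynomial (Fin 4) k))
    (hR : (R : Set (MvPolynomial (Fin 4) k)) = Rset k)
    (N : Submodule ↥R (Fin 3 → MvPolynomial (Fin 4) k))
    (hN : (N : Set (Fin 3 → MvPolynomial (Fin 4) k)) = Ae3set k) :
    ∃ Φ : ↥𝒜 ≃ₐ[k] Module.End ↥R ↥N,
      ∀ (M : ↥𝒜) (v : ↥N),
        ((Φ M v : Fin 3 → MvPolynomial (Fin 4) k))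
          = (M : Matrix (Fin 3) (Fin 3) (MvPolynomial (Fin 4) k)).mulVec ↑v := by
  exact ⟨AlgEquiv.ofBijective (A3aux.phiAlg h𝒜 hN)
    ⟨A3aux.phiAlg_inj h𝒜 hN, A3aux.phiAlg_surj h𝒜 hR hN⟩, fun M v => rfl⟩
end
end

section
/- Let k be a field, B = k[x,y,z,w], S = k[xz, yz, xw, yw] ⊆ B, I := xS + yS, J := zS + wS, and R := k + x²zwS + xyzwS + y²zwS (a k-subalgebra of S). Then the set A of all 4×4 matrices over B with entry pattern [[S, I, zI, wI],[J, S, zS, wS],[S, I, k + zI, wI],[S, I, zI, k + wI]] (where zI = xzS + yzS, wI = xwS + ywS, and k + zI and k + wI denote the indicated k-subalgebras of S) is a unital k-subalgebra of M₄(B), and its center equals R·1₄ = { r·1₄ : r ∈ R }. -/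
open MvPolynomial

noncomputable section

/-- `wI = xwS + ywS` as an `S`-submodule of `B`. -/
def wImod (k : Type*) [Field k] : Submodule ↥(quadS k) (MvPolynomial (Fin 4) k) :=
  Submodule.span ↥(quadS k) ({X 0 * X 3, X 1 * X 3} : Set (MvPolynomial (Fin 4) k))

/-- `wS` as an `S`-submodule of `B`. -/
def wSmod (k : Type*) [Field k] : Submodule ↥(quadS k) (MvPolynomial (Fin 4) k) :=
  Submodule.span ↥(quadS k) ({X 3} : Set (MvPolynomial (Fin 4) k))

/-- `zwI² = x²zwS + xyzwS + y²zwS` as an `S`-submodule of `B`. -/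
def zwI2mod (k : Type*) [Field k] : Submodule ↥(quadS k) (MvPolynomial (Fin 4) k) :=
  Submodule.span ↥(quadS k)
    ({X 0 ^ 2 * X 2 * X 3, X 0 * X 1 * X 2 * X 3, X 1 ^ 2 * X 2 * X 3} :
      Set (MvPolynomial (Fin 4) k))

/-- `k + zI` as a subset of `B`. -/
def kzIset (k : Type*) [Field k] : Set (MvPolynomial (Fin 4) k) :=
  {b | ∃ c : k, ∃ m ∈ zImod k, b = algebraMap k (MvPolynomial (Fin 4) k) c + m}

/-- `k + wI` as a subset of `B`. -/
def kwIset (k : Type*) [Field k] : Set (MvPolynomial (Fin 4) k) :=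
  {b | ∃ c : k, ∃ m ∈ wImod k, b = algebraMap k (MvPolynomial (Fin 4) k) c + m}

/-- `R = k + x²zwS + xyzwS + y²zwS` as a subset of `B`. -/
def R4set (k : Type*) [Field k] : Set (MvPolynomial (Fin 4) k) :=
  {b | ∃ c : k, ∃ m ∈ zwI2mod k, b = algebraMap k (MvPolynomial (Fin 4) k) c + m}

/-- The set of `4 × 4` matrices over `B` with entry pattern
`[[S, I, zI, wI], [J, S, zS, wS], [S, I, k + zI, wI], [S, I, zI, k + wI]]`. -/
def A4set (k : Type*) [Field k] : Set (Matrix (Fin 4) (Fin 4) (MvPolynomial (Fin 4) k)) :=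
  {M | M 0 0 ∈ quadS k ∧ M 0 1 ∈ Imod k ∧ M 0 2 ∈ zImod k ∧ M 0 3 ∈ wImod k ∧
       M 1 0 ∈ Jmod k ∧ M 1 1 ∈ quadS k ∧ M 1 2 ∈ zSmod k ∧ M 1 3 ∈ wSmod k ∧
       M 2 0 ∈ quadS k ∧ M 2 1 ∈ Imod k ∧ M 2 2 ∈ kzIset k ∧ M 2 3 ∈ wImod k ∧
       M 3 0 ∈ quadS k ∧ M 3 1 ∈ Imod k ∧ M 3 2 ∈ zImod k ∧ M 3 3 ∈ kwIset k}

section Aux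

variable {k : Type*} [Field k]

/-- weight condition -/
def Cnd (e : ℤ) (a b : ℕ) (p : MvPolynomial (Fin 4) k) : Prop :=
  ∀ m ∈ p.support, ((m 0 : ℤ) + m 1 = m 2 + m 3 + e) ∧ a ≤ m 2 ∧ b ≤ m 3

lemma Cnd_zero {e a b} : Cnd e a b (0 : MvPolynomial (Fin 4) k) := by
  intro m hm; simp at hm

lemma Cnd_add {e a b} {p q : MvPolynomial (Fin 4) k} (hp : Cnd e a b p) (hq : Cnd e a b q) :
    Cnd e a b (p + q) := by
  intro m hm
  rcases Finset.mem_union.1 (MvPolynomial.support_add hm) with h | h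
  · exact hp m h
  · exact hq m h

lemma Cnd_neg {e a b} {p : MvPolynomial (Fin 4) k} (hp : Cnd e a b p) : Cnd e a b (-p) := by
  intro m hm; exact hp m (by simpa using hm)

lemma Cnd_mul {e₁ e₂ a₁ a₂ b₁ b₂} {p q : MvPolynomial (Fin 4) k}
    (hp : Cnd e₁ a₁ b₁ p) (hq : Cnd e₂ a₂ b₂ q) :
    Cnd (e₁ + e₂) (a₁ + a₂) (b₁ + b₂) (p * q) := by
  intro m hm
  rcases Finset.mem_add.1 (MvPolynomial.support_mul p q hm) with ⟨m₁, h₁, m₂, h₂, rfl⟩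
  obtain ⟨e1, a1, b1⟩ := hp m₁ h₁
  obtain ⟨e2, a2, b2⟩ := hq m₂ h₂
  simp only [Finsupp.add_apply]
  push_cast
  omega

lemma Cnd_mono {e a a' b b'} {p : MvPolynomial (Fin 4) k} (ha : a' ≤ a) (hb : b' ≤ b)
    (hp : Cnd e a b p) : Cnd e a' b' p := by
  intro m hm; obtain ⟨h1, h2, h3⟩ := hp m hm; exact ⟨h1, le_trans ha h2, le_trans hb h3⟩

lemma Cnd_C {c : k} : Cnd 0 0 0 (C c : MvPolynomial (Fin 4) k) := by
  classical
  intro m hm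
  rcases eq_or_ne c 0 with rfl | hc
  · simp at hm
  · rw [MvPolynomial.C_apply, MvPolynomial.support_monomial, if_neg hc] at hm
    simp at hm
    subst hm
    simp

lemma Cnd_monomial {e : ℤ} {a b : ℕ} {m : Fin 4 →₀ ℕ} {c : k}
    (h : ((m 0 : ℤ) + m 1 = m 2 + m 3 + e) ∧ a ≤ m 2 ∧ b ≤ m 3) :
    Cnd e a b (monomial m c) := by
  classical
  intro m' hm'
  rw [MvPolynomial.support_monomial] at hm'
  split at hm'
  · simp at hm'
  · simp at hm'; subst hm'; exact h

lemma Cnd_X02 : Cnd 0 1 0 (X 0 * X 2 : MvPolynomial (Fin 4) k) := by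
  have : (X 0 * X 2 : MvPolynomial (Fin 4) k) =
      monomial (Finsupp.single 0 1 + Finsupp.single 2 1) 1 := by
    rw [MvPolynomial.X, MvPolynomial.X, MvPolynomial.monomial_mul, one_mul]
  rw [this]
  exact Cnd_monomial (by simp [Finsupp.single_apply])

lemma X_mul_X_eq (i j : Fin 4) :
    (X i * X j : MvPolynomial (Fin 4) k) = monomial (Finsupp.single i 1 + Finsupp.single j 1) 1 := by
  rw [MvPolynomial.X, MvPolynomial.X, MvPolynomial.monomial_mul, one_mul]

lemma factor_monomial (m : Fin 4 →₀ ℕ) (c : k) (i j : Fin 4) (hij : i ≠ j)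
    (hi : 1 ≤ m i) (hj : 1 ≤ m j) :
    (monomial m c : MvPolynomial (Fin 4) k)
      = (X i * X j) * monomial (m - Finsupp.single i 1 - Finsupp.single j 1) c := by
  have hsum : Finsupp.single i 1 + Finsupp.single j 1
      + (m - Finsupp.single i 1 - Finsupp.single j 1) = m := by
    apply Finsupp.ext
    intro a
    simp only [Finsupp.coe_add, Finsupp.coe_tsub, Pi.add_apply, Pi.sub_apply,
      Finsupp.single_apply]
    rcases eq_or_ne i a with h1 | h1 <;> rcases eq_or_ne j a with h2 | h2 <;>
      simp_all <;> omega
  rw [X_mul_X_eq, MvPolynomial.monomial_mul, one_mul, hsum]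

lemma gen_mem_quadS (i j : Fin 4) (hi : i = 0 ∨ i = 1) (hj : j = 2 ∨ j = 3) :
    (X i * X j : MvPolynomial (Fin 4) k) ∈ quadS k := by
  apply Algebra.subset_adjoin
  rcases hi with rfl | rfl <;> rcases hj with rfl | rfl <;> simp

lemma monomial_mem_quadS (c : k) :
    ∀ n (m : Fin 4 →₀ ℕ), m 2 + m 3 = n → m 0 + m 1 = m 2 + m 3 →
      (monomial m c : MvPolynomial (Fin 4) k) ∈ quadS k := by
  intro n
  induction n using Nat.strong_induction_on with
  | _ n ih =>
    intro m hn hbal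
    rcases Nat.eq_zero_or_pos n with rfl | hpos
    · have hm : m = 0 := by
        have h0 : m 0 = 0 := by omega
        have h1 : m 1 = 0 := by omega
        have h2 : m 2 = 0 := by omega
        have h3 : m 3 = 0 := by omega
        ext a
        have ha : a = 0 ∨ a = 1 ∨ a = 2 ∨ a = 3 := by revert a; decide
        rcases ha with rfl|rfl|rfl|rfl <;> simp [h0, h1, h2, h3]
      subst hm
      rw [MvPolynomial.monomial_zero']
      exact Subalgebra.algebraMap_mem _ c
    · have hi : 1 ≤ m 0 ∨ 1 ≤ m 1 := by omega
      have hj : 1 ≤ m 2 ∨ 1 ≤ m 3 := by omega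
      have key : ∀ i j : Fin 4, (i = 0 ∨ i = 1) → (j = 2 ∨ j = 3) → 1 ≤ m i → 1 ≤ m j →
          (monomial m c : MvPolynomial (Fin 4) k) ∈ quadS k := by
        intro i j hi' hj' h1 h2
        have hij : i ≠ j := by rcases hi' with rfl|rfl <;> rcases hj' with rfl|rfl <;> decide
        rw [factor_monomial m c i j hij h1 h2]
        refine mul_mem (gen_mem_quadS i j hi' hj') ?_
        set m' := m - Finsupp.single i 1 - Finsupp.single j 1 with hm'
        have hval : ∀ a : Fin 4, m' a = m a - (if i = a then 1 else 0) - (if j = a then 1 else 0) := by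
          intro a
          simp [hm', Finsupp.sub_apply, Finsupp.single_apply]
        have e0 := hval 0; have e1 := hval 1; have e2 := hval 2; have e3 := hval 3
        rcases hi' with rfl|rfl <;> rcases hj' with rfl|rfl <;>
          simp only [show ((0:Fin 4) = 0) = True from by simp, if_true] at e0 e1 e2 e3 <;>
          [skip; skip; skip; skip] <;>
          exact ih (m' 2 + m' 3) (by simp_all; omega) m' rfl (by simp_all; omega)
      rcases hi with h1 | h1 <;> rcases hj with h2 | h2
      · exact key 0 2 (Or.inl rfl) (Or.inl rfl) h1 h2
      · exact key 0 3 (Or.inl rfl) (Or.inr rfl) h1 h2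
      · exact key 1 2 (Or.inr rfl) (Or.inl rfl) h1 h2
      · exact key 1 3 (Or.inr rfl) (Or.inr rfl) h1 h2

lemma Cnd_mul_of {e₁ e₂ e₃ : ℤ} {a₁ a₂ a₃ b₁ b₂ b₃ : ℕ} {p q : MvPolynomial (Fin 4) k}
    (hp : Cnd e₁ a₁ b₁ p) (hq : Cnd e₂ a₂ b₂ q)
    (he : e₃ = e₁ + e₂) (ha : a₃ ≤ a₁ + a₂) (hb : b₃ ≤ b₁ + b₂) :
    Cnd e₃ a₃ b₃ (p * q) := by
  subst he
  exact Cnd_mono ha hb (Cnd_mul hp hq)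

lemma Cnd_single_mono {e : ℤ} {a b : ℕ} (i j : Fin 4) (ci cj : ℕ) {c : k}
    (h : ((Finsupp.single i ci + Finsupp.single j cj : Fin 4 →₀ ℕ) 0 : ℤ)
          + ((Finsupp.single i ci + Finsupp.single j cj : Fin 4 →₀ ℕ) 1)
        = ((Finsupp.single i ci + Finsupp.single j cj : Fin 4 →₀ ℕ) 2)
          + ((Finsupp.single i ci + Finsupp.single j cj : Fin 4 →₀ ℕ) 3) + e)
    (ha : a ≤ (Finsupp.single i ci + Finsupp.single j cj : Fin 4 →₀ ℕ) 2)
    (hb : b ≤ (Finsupp.single i ci + Finsupp.single j cj : Fin 4 →₀ ℕ) 3) :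
    Cnd e a b (monomial (Finsupp.single i ci + Finsupp.single j cj) c) :=
  Cnd_monomial ⟨h, ha, hb⟩

lemma Cnd_XX {e : ℤ} {a b : ℕ} (i j : Fin 4)
    (h : ((Finsupp.single i 1 + Finsupp.single j 1 : Fin 4 →₀ ℕ) 0 : ℤ)
          + ((Finsupp.single i 1 + Finsupp.single j 1 : Fin 4 →₀ ℕ) 1)
        = ((Finsupp.single i 1 + Finsupp.single j 1 : Fin 4 →₀ ℕ) 2)
          + ((Finsupp.single i 1 + Finsupp.single j 1 : Fin 4 →₀ ℕ) 3) + e)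
    (ha : a ≤ (Finsupp.single i 1 + Finsupp.single j 1 : Fin 4 →₀ ℕ) 2)
    (hb : b ≤ (Finsupp.single i 1 + Finsupp.single j 1 : Fin 4 →₀ ℕ) 3) :
    Cnd e a b (X i * X j : MvPolynomial (Fin 4) k) := by
  rw [X_mul_X_eq]
  exact Cnd_monomial ⟨h, ha, hb⟩

lemma Cnd_Xsingle {e : ℤ} {a b : ℕ} (i : Fin 4)
    (h : ((Finsupp.single i 1 : Fin 4 →₀ ℕ) 0 : ℤ) + ((Finsupp.single i 1 : Fin 4 →₀ ℕ) 1)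
        = ((Finsupp.single i 1 : Fin 4 →₀ ℕ) 2) + ((Finsupp.single i 1 : Fin 4 →₀ ℕ) 3) + e)
    (ha : a ≤ (Finsupp.single i 1 : Fin 4 →₀ ℕ) 2)
    (hb : b ≤ (Finsupp.single i 1 : Fin 4 →₀ ℕ) 3) :
    Cnd e a b (X i : MvPolynomial (Fin 4) k) := by
  rw [MvPolynomial.X]
  exact Cnd_monomial ⟨h, ha, hb⟩

lemma quadS_subset_Cnd {p : MvPolynomial (Fin 4) k} (hp : p ∈ quadS k) : Cnd 0 0 0 p := by
  induction hp using Algebra.adjoin_induction with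
  | mem x hx =>
    rcases hx with rfl | rfl | rfl | rfl <;>
      exact Cnd_XX _ _ (by simp [Finsupp.single_apply]) (by simp) (by simp)
  | algebraMap r => exact Cnd_C
  | add x y _ _ hx hy => exact Cnd_add hx hy
  | mul x y _ _ hx hy => exact Cnd_mul_of hx hy (by ring) (by omega) (by omega)

lemma Cnd_subset_quadS {p : MvPolynomial (Fin 4) k} (hp : Cnd 0 0 0 p) : p ∈ quadS k := by
  rw [p.as_sum]
  refine Subalgebra.sum_mem _ fun m hm => ?_
  obtain ⟨h1, -, -⟩ := hp m hm
  exact monomial_mem_quadS _ _ m rfl (by omega)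

lemma mem_quadS_iff {p : MvPolynomial (Fin 4) k} : p ∈ quadS k ↔ Cnd 0 0 0 p :=
  ⟨quadS_subset_Cnd, Cnd_subset_quadS⟩

lemma Cnd_span_subset {G : Set (MvPolynomial (Fin 4) k)} {e : ℤ} {a b : ℕ}
    (hG : ∀ g ∈ G, Cnd e a b g) {p : MvPolynomial (Fin 4) k}
    (hp : p ∈ Submodule.span ↥(quadS k) G) : Cnd e a b p := by
  induction hp using Submodule.span_induction with
  | mem x hx => exact hG x hx
  | zero => exact Cnd_zero
  | add x y _ _ hx hy => exact Cnd_add hx hy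
  | smul s x _ hx =>
    exact Cnd_mul_of (quadS_subset_Cnd s.2) hx (by ring) (by omega) (by omega)

/-- the exponent quadruple -/
def quad (c0 c1 c2 c3 : ℕ) : Fin 4 →₀ ℕ :=
  Finsupp.single 0 c0 + Finsupp.single 1 c1 + Finsupp.single 2 c2 + Finsupp.single 3 c3

@[simp] lemma quad_apply0 {c0 c1 c2 c3 : ℕ} : quad c0 c1 c2 c3 0 = c0 := by
  simp [quad, Finsupp.single_apply]
@[simp] lemma quad_apply1 {c0 c1 c2 c3 : ℕ} : quad c0 c1 c2 c3 1 = c1 := by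
  simp [quad, Finsupp.single_apply]
@[simp] lemma quad_apply2 {c0 c1 c2 c3 : ℕ} : quad c0 c1 c2 c3 2 = c2 := by
  simp [quad, Finsupp.single_apply]
@[simp] lemma quad_apply3 {c0 c1 c2 c3 : ℕ} : quad c0 c1 c2 c3 3 = c3 := by
  simp [quad, Finsupp.single_apply]

lemma quad_le {c0 c1 c2 c3 : ℕ} {m : Fin 4 →₀ ℕ} (h0 : c0 ≤ m 0) (h1 : c1 ≤ m 1)
    (h2 : c2 ≤ m 2) (h3 : c3 ≤ m 3) : ∀ a, quad c0 c1 c2 c3 a ≤ m a := by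
  intro a
  have ha : a = 0 ∨ a = 1 ∨ a = 2 ∨ a = 3 := by revert a; decide
  rcases ha with rfl|rfl|rfl|rfl <;> simpa

lemma monomial_mem_span {G : Set (MvPolynomial (Fin 4) k)} {g : Fin 4 →₀ ℕ}
    (hg : (monomial g 1 : MvPolynomial (Fin 4) k) ∈ G) {m : Fin 4 →₀ ℕ} (c : k)
    (hle : ∀ a, g a ≤ m a)
    (hbal : (m 0 - g 0) + (m 1 - g 1) = (m 2 - g 2) + (m 3 - g 3)) :
    (monomial m c : MvPolynomial (Fin 4) k) ∈ Submodule.span ↥(quadS k) G := by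
  have hle' : g ≤ m := Finsupp.le_def.2 hle
  have hmem : (monomial (m - g) c : MvPolynomial (Fin 4) k) ∈ quadS k := by
    refine monomial_mem_quadS c _ _ rfl ?_
    simp only [Finsupp.tsub_apply]
    omega
  have heq : (monomial m c : MvPolynomial (Fin 4) k) = monomial (m - g) c * monomial g 1 := by
    rw [MvPolynomial.monomial_mul, mul_one, tsub_add_cancel_of_le hle']
  rw [heq]
  exact Submodule.smul_mem _ (⟨monomial (m - g) c, hmem⟩ : ↥(quadS k))
    (Submodule.subset_span hg)

lemma gen_x : (X 0 : MvPolynomial (Fin 4) k) = monomial (quad 1 0 0 0) 1 := by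
  rw [MvPolynomial.X]; congr 1; simp [quad]
lemma gen_y : (X 1 : MvPolynomial (Fin 4) k) = monomial (quad 0 1 0 0) 1 := by
  rw [MvPolynomial.X]; congr 1; simp [quad]
lemma gen_z : (X 2 : MvPolynomial (Fin 4) k) = monomial (quad 0 0 1 0) 1 := by
  rw [MvPolynomial.X]; congr 1; simp [quad]
lemma gen_w : (X 3 : MvPolynomial (Fin 4) k) = monomial (quad 0 0 0 1) 1 := by
  rw [MvPolynomial.X]; congr 1; simp [quad]
lemma gen_xz : (X 0 * X 2 : MvPolynomial (Fin 4) k) = monomial (quad 1 0 1 0) 1 := by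
  rw [X_mul_X_eq]; congr 1; simp [quad]
lemma gen_yz : (X 1 * X 2 : MvPolynomial (Fin 4) k) = monomial (quad 0 1 1 0) 1 := by
  rw [X_mul_X_eq]; congr 1; simp [quad]
lemma gen_xw : (X 0 * X 3 : MvPolynomial (Fin 4) k) = monomial (quad 1 0 0 1) 1 := by
  rw [X_mul_X_eq]; congr 1; simp [quad]
lemma gen_yw : (X 1 * X 3 : MvPolynomial (Fin 4) k) = monomial (quad 0 1 0 1) 1 := by
  rw [X_mul_X_eq]; congr 1; simp [quad]
lemma gen_x2zw : (X 0 ^ 2 * X 2 * X 3 : MvPolynomial (Fin 4) k) = monomial (quad 2 0 1 1) 1 := by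
  rw [MvPolynomial.X_pow_eq_monomial, MvPolynomial.X, MvPolynomial.X,
    MvPolynomial.monomial_mul, MvPolynomial.monomial_mul]
  simp only [mul_one]
  congr 1
  simp [quad, add_assoc]
lemma gen_xyzw : (X 0 * X 1 * X 2 * X 3 : MvPolynomial (Fin 4) k) = monomial (quad 1 1 1 1) 1 := by
  rw [MvPolynomial.X, MvPolynomial.X, MvPolynomial.X, MvPolynomial.X,
    MvPolynomial.monomial_mul, MvPolynomial.monomial_mul, MvPolynomial.monomial_mul]
  simp only [mul_one]
  congr 1
lemma gen_y2zw : (X 1 ^ 2 * X 2 * X 3 : MvPolynomial (Fin 4) k) = monomial (quad 0 2 1 1) 1 := by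
  rw [MvPolynomial.X_pow_eq_monomial, MvPolynomial.X, MvPolynomial.X,
    MvPolynomial.monomial_mul, MvPolynomial.monomial_mul]
  simp only [mul_one]
  congr 1
  simp [quad, add_assoc]

lemma mem_Imod_iff {p : MvPolynomial (Fin 4) k} : p ∈ Imod k ↔ Cnd 1 0 0 p := by
  constructor
  · refine fun hp => Cnd_span_subset (fun g hg => ?_) hp
    rcases hg with rfl | rfl
    · rw [gen_x]; exact Cnd_monomial (by simp)
    · rw [gen_y]; exact Cnd_monomial (by simp)
  · intro hp
    rw [p.as_sum]
    refine Submodule.sum_mem _ fun m hm => ?_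
    obtain ⟨h1, h2, h3⟩ := hp m hm
    by_cases h0 : 1 ≤ m 0
    · exact monomial_mem_span (by rw [← gen_x]; exact Set.mem_insert _ _) _
        (quad_le h0 (by omega) (by omega) (by omega))
        (by simp only [quad_apply0, quad_apply1, quad_apply2, quad_apply3]; omega)
    · exact monomial_mem_span (by rw [← gen_y]; exact Set.mem_insert_iff.2 (Or.inr rfl)) _
        (quad_le (by omega) (by omega) (by omega) (by omega))
        (by simp only [quad_apply0, quad_apply1, quad_apply2, quad_apply3]; omega)

lemma mem_Jmod_iff {p : MvPolynomial (Fin 4) k} : p ∈ Jmod k ↔ Cnd (-1) 0 0 p := by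
  constructor
  · refine fun hp => Cnd_span_subset (fun g hg => ?_) hp
    rcases hg with rfl | rfl
    · rw [gen_z]; exact Cnd_monomial (by simp)
    · rw [gen_w]; exact Cnd_monomial (by simp)
  · intro hp
    rw [p.as_sum]
    refine Submodule.sum_mem _ fun m hm => ?_
    obtain ⟨h1, h2, h3⟩ := hp m hm
    by_cases h0 : 1 ≤ m 2
    · exact monomial_mem_span (by rw [← gen_z]; exact Set.mem_insert _ _) _
        (quad_le (by omega) (by omega) h0 (by omega))
        (by simp only [quad_apply0, quad_apply1, quad_apply2, quad_apply3]; omega)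
    · exact monomial_mem_span (by rw [← gen_w]; exact Set.mem_insert_iff.2 (Or.inr rfl)) _
        (quad_le (by omega) (by omega) (by omega) (by omega))
        (by simp only [quad_apply0, quad_apply1, quad_apply2, quad_apply3]; omega)

lemma mem_zImod_iff {p : MvPolynomial (Fin 4) k} : p ∈ zImod k ↔ Cnd 0 1 0 p := by
  constructor
  · refine fun hp => Cnd_span_subset (fun g hg => ?_) hp
    rcases hg with rfl | rfl
    · rw [gen_xz]; exact Cnd_monomial (by simp)
    · rw [gen_yz]; exact Cnd_monomial (by simp)
  · intro hp
    rw [p.as_sum]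
    refine Submodule.sum_mem _ fun m hm => ?_
    obtain ⟨h1, h2, h3⟩ := hp m hm
    by_cases h0 : 1 ≤ m 0
    · exact monomial_mem_span (by rw [← gen_xz]; exact Set.mem_insert _ _) _
        (quad_le h0 (by omega) (by omega) (by omega))
        (by simp only [quad_apply0, quad_apply1, quad_apply2, quad_apply3]; omega)
    · exact monomial_mem_span (by rw [← gen_yz]; exact Set.mem_insert_iff.2 (Or.inr rfl)) _
        (quad_le (by omega) (by omega) (by omega) (by omega))
        (by simp only [quad_apply0, quad_apply1, quad_apply2, quad_apply3]; omega)

lemma mem_wImod_iff {p : MvPolynomial (Fin 4) k} : p ∈ wImod k ↔ Cnd 0 0 1 p := by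
  constructor
  · refine fun hp => Cnd_span_subset (fun g hg => ?_) hp
    rcases hg with rfl | rfl
    · rw [gen_xw]; exact Cnd_monomial (by simp)
    · rw [gen_yw]; exact Cnd_monomial (by simp)
  · intro hp
    rw [p.as_sum]
    refine Submodule.sum_mem _ fun m hm => ?_
    obtain ⟨h1, h2, h3⟩ := hp m hm
    by_cases h0 : 1 ≤ m 0
    · exact monomial_mem_span (by rw [← gen_xw]; exact Set.mem_insert _ _) _
        (quad_le h0 (by omega) (by omega) (by omega))
        (by simp only [quad_apply0, quad_apply1, quad_apply2, quad_apply3]; omega)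
    · exact monomial_mem_span (by rw [← gen_yw]; exact Set.mem_insert_iff.2 (Or.inr rfl)) _
        (quad_le (by omega) (by omega) (by omega) (by omega))
        (by simp only [quad_apply0, quad_apply1, quad_apply2, quad_apply3]; omega)

lemma mem_zSmod_iff {p : MvPolynomial (Fin 4) k} : p ∈ zSmod k ↔ Cnd (-1) 1 0 p := by
  constructor
  · refine fun hp => Cnd_span_subset (fun g hg => ?_) hp
    rcases hg with rfl
    rw [gen_z]; exact Cnd_monomial (by simp)
  · intro hp
    rw [p.as_sum]
    refine Submodule.sum_mem _ fun m hm => ?_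
    obtain ⟨h1, h2, h3⟩ := hp m hm
    exact monomial_mem_span (by rw [← gen_z]; exact Set.mem_singleton _) _
      (quad_le (by omega) (by omega) h2 (by omega))
      (by simp only [quad_apply0, quad_apply1, quad_apply2, quad_apply3]; omega)

lemma mem_wSmod_iff {p : MvPolynomial (Fin 4) k} : p ∈ wSmod k ↔ Cnd (-1) 0 1 p := by
  constructor
  · refine fun hp => Cnd_span_subset (fun g hg => ?_) hp
    rcases hg with rfl
    rw [gen_w]; exact Cnd_monomial (by simp)
  · intro hp
    rw [p.as_sum]
    refine Submodule.sum_mem _ fun m hm => ?_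
    obtain ⟨h1, h2, h3⟩ := hp m hm
    exact monomial_mem_span (by rw [← gen_w]; exact Set.mem_singleton _) _
      (quad_le (by omega) (by omega) (by omega) h3)
      (by simp only [quad_apply0, quad_apply1, quad_apply2, quad_apply3]; omega)

lemma mem_zwI2mod_iff {p : MvPolynomial (Fin 4) k} : p ∈ zwI2mod k ↔ Cnd 0 1 1 p := by
  constructor
  · refine fun hp => Cnd_span_subset (fun g hg => ?_) hp
    rcases hg with rfl | rfl | rfl
    · rw [gen_x2zw]; exact Cnd_monomial (by simp)
    · rw [gen_xyzw]; exact Cnd_monomial (by simp)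
    · rw [gen_y2zw]; exact Cnd_monomial (by simp)
  · intro hp
    rw [p.as_sum]
    refine Submodule.sum_mem _ fun m hm => ?_
    obtain ⟨h1, h2, h3⟩ := hp m hm
    by_cases h0 : 2 ≤ m 0
    · exact monomial_mem_span (by rw [← gen_x2zw]; exact Set.mem_insert _ _) _
        (quad_le h0 (by omega) h2 h3)
        (by simp only [quad_apply0, quad_apply1, quad_apply2, quad_apply3]; omega)
    · by_cases h0' : 1 ≤ m 0
      · exact monomial_mem_span
          (by rw [← gen_xyzw]; exact Set.mem_insert_iff.2 (Or.inr (Set.mem_insert _ _))) _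
          (quad_le h0' (by omega) h2 h3)
          (by simp only [quad_apply0, quad_apply1, quad_apply2, quad_apply3]; omega)
      · exact monomial_mem_span
          (by rw [← gen_y2zw];
              exact Set.mem_insert_iff.2 (Or.inr (Set.mem_insert_iff.2 (Or.inr rfl)))) _
          (quad_le (by omega) (by omega) h2 h3)
          (by simp only [quad_apply0, quad_apply1, quad_apply2, quad_apply3]; omega)

lemma coeff_zero_of_Cnd {e : ℤ} {a b : ℕ} {p : MvPolynomial (Fin 4) k}
    (h : Cnd e a b p) (hab : 1 ≤ a ∨ 1 ≤ b) : MvPolynomial.coeff 0 p = 0 := by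
  by_contra hc
  obtain ⟨-, h2, h3⟩ := h 0 (MvPolynomial.mem_support_iff.2 hc)
  simp at h2 h3
  omega

/-- diagonal intersection lemma -/
lemma mem_R4set_of (p : MvPolynomial (Fin 4) k) (hS : p ∈ quadS k)
    (hz : p ∈ kzIset k) (hw : p ∈ kwIset k) : p ∈ R4set k := by
  obtain ⟨c1, m1, hm1, rfl⟩ := hz
  obtain ⟨c2, m2, hm2, he⟩ := hw
  have hc1 : Cnd 0 1 0 m1 := mem_zImod_iff.1 hm1
  have hc2 : Cnd 0 0 1 m2 := mem_wImod_iff.1 hm2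
  have h0 : c1 = c2 := by
    have := congrArg (MvPolynomial.coeff 0) he
    rw [MvPolynomial.coeff_add, MvPolynomial.coeff_add,
      coeff_zero_of_Cnd hc1 (Or.inl le_rfl), coeff_zero_of_Cnd hc2 (Or.inr le_rfl)] at this
    simpa [MvPolynomial.algebraMap_eq] using this
  subst h0
  have hm : m1 = m2 := by
    have := he
    exact add_left_cancel this
  subst hm
  refine ⟨c1, m1, ?_, rfl⟩
  rw [mem_zwI2mod_iff]
  intro m hm
  obtain ⟨a1, a2, a3⟩ := hc1 m hm
  obtain ⟨-, -, b3⟩ := hc2 m hm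
  exact ⟨a1, a2, b3⟩

lemma algebraMap_eq_C (c : k) : algebraMap k (MvPolynomial (Fin 4) k) c = C c := rfl

lemma Cnd_mul_kzI {e : ℤ} {a b : ℕ} {p q : MvPolynomial (Fin 4) k}
    (hp : Cnd e a b p) (hq : q ∈ kzIset k) : Cnd e a b (p * q) := by
  obtain ⟨c, m, hm, rfl⟩ := hq
  rw [mul_add]
  exact Cnd_add (Cnd_mul_of hp (by rw [algebraMap_eq_C]; exact Cnd_C) (by ring) (by omega) (by omega))
    (Cnd_mul_of hp (mem_zImod_iff.1 hm) (by ring) (by omega) (by omega))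

lemma Cnd_mul_kwI {e : ℤ} {a b : ℕ} {p q : MvPolynomial (Fin 4) k}
    (hp : Cnd e a b p) (hq : q ∈ kwIset k) : Cnd e a b (p * q) := by
  obtain ⟨c, m, hm, rfl⟩ := hq
  rw [mul_add]
  exact Cnd_add (Cnd_mul_of hp (by rw [algebraMap_eq_C]; exact Cnd_C) (by ring) (by omega) (by omega))
    (Cnd_mul_of hp (mem_wImod_iff.1 hm) (by ring) (by omega) (by omega))

lemma Cnd_kzI_mul {e : ℤ} {a b : ℕ} {p q : MvPolynomial (Fin 4) k}
    (hp : p ∈ kzIset k) (hq : Cnd e a b q) : Cnd e a b (p * q) := by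
  rw [mul_comm]; exact Cnd_mul_kzI hq hp

lemma Cnd_kwI_mul {e : ℤ} {a b : ℕ} {p q : MvPolynomial (Fin 4) k}
    (hp : p ∈ kwIset k) (hq : Cnd e a b q) : Cnd e a b (p * q) := by
  rw [mul_comm]; exact Cnd_mul_kwI hq hp

lemma add_mem_kzI {p q : MvPolynomial (Fin 4) k} (hp : p ∈ kzIset k) (hq : Cnd 0 1 0 q) :
    p + q ∈ kzIset k := by
  obtain ⟨c, m, hm, rfl⟩ := hp
  exact ⟨c, m + q, add_mem hm (mem_zImod_iff.2 hq), by ring⟩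

lemma add_mem_kzI' {p q : MvPolynomial (Fin 4) k} (hp : Cnd 0 1 0 p) (hq : q ∈ kzIset k) :
    p + q ∈ kzIset k := by
  rw [add_comm]; exact add_mem_kzI hq hp

lemma add_mem_kwI {p q : MvPolynomial (Fin 4) k} (hp : p ∈ kwIset k) (hq : Cnd 0 0 1 q) :
    p + q ∈ kwIset k := by
  obtain ⟨c, m, hm, rfl⟩ := hp
  exact ⟨c, m + q, add_mem hm (mem_wImod_iff.2 hq), by ring⟩

lemma add_mem_kwI' {p q : MvPolynomial (Fin 4) k} (hp : Cnd 0 0 1 p) (hq : q ∈ kwIset k) :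
    p + q ∈ kwIset k := by
  rw [add_comm]; exact add_mem_kwI hq hp

lemma kzI_mul_kzI {p q : MvPolynomial (Fin 4) k} (hp : p ∈ kzIset k) (hq : q ∈ kzIset k) :
    p * q ∈ kzIset k := by
  obtain ⟨c, m, hm, rfl⟩ := hp
  obtain ⟨c', m', hm', rfl⟩ := hq
  have h1 : Cnd 0 1 0 m := mem_zImod_iff.1 hm
  have h1' : Cnd 0 1 0 m' := mem_zImod_iff.1 hm'
  refine ⟨c * c', C c * m' + m * C c' + m * m', mem_zImod_iff.2 ?_, ?_⟩
  · exact Cnd_add (Cnd_add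
      (Cnd_mul_of Cnd_C h1' (by ring) (by omega) (by omega))
      (Cnd_mul_of h1 Cnd_C (by ring) (by omega) (by omega)))
      (Cnd_mul_of h1 h1' (by ring) (by omega) (by omega))
  · rw [algebraMap_eq_C, algebraMap_eq_C, algebraMap_eq_C, MvPolynomial.C_mul]
    ring

lemma kwI_mul_kwI {p q : MvPolynomial (Fin 4) k} (hp : p ∈ kwIset k) (hq : q ∈ kwIset k) :
    p * q ∈ kwIset k := by
  obtain ⟨c, m, hm, rfl⟩ := hp
  obtain ⟨c', m', hm', rfl⟩ := hq
  have h1 : Cnd 0 0 1 m := mem_wImod_iff.1 hm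
  have h1' : Cnd 0 0 1 m' := mem_wImod_iff.1 hm'
  refine ⟨c * c', C c * m' + m * C c' + m * m', mem_wImod_iff.2 ?_, ?_⟩
  · exact Cnd_add (Cnd_add
      (Cnd_mul_of Cnd_C h1' (by ring) (by omega) (by omega))
      (Cnd_mul_of h1 Cnd_C (by ring) (by omega) (by omega)))
      (Cnd_mul_of h1 h1' (by ring) (by omega) (by omega))
  · rw [algebraMap_eq_C, algebraMap_eq_C, algebraMap_eq_C, MvPolynomial.C_mul]
    ring

lemma kzI_zero : (0 : MvPolynomial (Fin 4) k) ∈ kzIset k :=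
  ⟨0, 0, Submodule.zero_mem _, by simp⟩
lemma kwI_zero : (0 : MvPolynomial (Fin 4) k) ∈ kwIset k :=
  ⟨0, 0, Submodule.zero_mem _, by simp⟩
lemma kzI_C (c : k) : (C c : MvPolynomial (Fin 4) k) ∈ kzIset k :=
  ⟨c, 0, Submodule.zero_mem _, by simp [algebraMap_eq_C]⟩
lemma kwI_C (c : k) : (C c : MvPolynomial (Fin 4) k) ∈ kwIset k :=
  ⟨c, 0, Submodule.zero_mem _, by simp [algebraMap_eq_C]⟩
lemma kzI_one : (1 : MvPolynomial (Fin 4) k) ∈ kzIset k := by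
  simpa using kzI_C (1 : k)
lemma kwI_one : (1 : MvPolynomial (Fin 4) k) ∈ kwIset k := by
  simpa using kwI_C (1 : k)
lemma kzI_add {p q : MvPolynomial (Fin 4) k} (hp : p ∈ kzIset k) (hq : q ∈ kzIset k) :
    p + q ∈ kzIset k := by
  obtain ⟨c, m, hm, rfl⟩ := hp
  obtain ⟨c', m', hm', rfl⟩ := hq
  exact ⟨c + c', m + m', add_mem hm hm', by rw [map_add]; ring⟩
lemma kwI_add {p q : MvPolynomial (Fin 4) k} (hp : p ∈ kwIset k) (hq : q ∈ kwIset k) :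
    p + q ∈ kwIset k := by
  obtain ⟨c, m, hm, rfl⟩ := hp
  obtain ⟨c', m', hm', rfl⟩ := hq
  exact ⟨c + c', m + m', add_mem hm hm', by rw [map_add]; ring⟩

def A4alg (k : Type*) [Field k] : Subalgebra k (Matrix (Fin 4) (Fin 4) (MvPolynomial (Fin 4) k)) where
  carrier := A4set k
  zero_mem' := by
    refine ⟨?_, ?_, ?_, ?_, ?_, ?_, ?_, ?_, ?_, ?_, ?_, ?_, ?_, ?_, ?_, ?_⟩ <;>
      first
        | exact zero_mem _
        | exact kzI_zero
        | exact kwI_zero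
  add_mem' := by
    rintro M N ⟨a00, a01, a02, a03, a10, a11, a12, a13, a20, a21, a22, a23, a30, a31, a32, a33⟩
      ⟨b00, b01, b02, b03, b10, b11, b12, b13, b20, b21, b22, b23, b30, b31, b32, b33⟩
    refine ⟨?_, ?_, ?_, ?_, ?_, ?_, ?_, ?_, ?_, ?_, ?_, ?_, ?_, ?_, ?_, ?_⟩ <;>
      simp only [Matrix.add_apply] <;>
      first
        | exact add_mem ‹_› ‹_›
        | exact kzI_add a22 b22
        | exact kwI_add a33 b33
  algebraMap_mem' := by
    intro r
    refine ⟨?_, ?_, ?_, ?_, ?_, ?_, ?_, ?_, ?_, ?_, ?_, ?_, ?_, ?_, ?_, ?_⟩ <;>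
      rw [Matrix.algebraMap_matrix_apply] <;>
      first
        | (rw [if_pos rfl]; first
            | exact Subalgebra.algebraMap_mem _ _
            | exact kzI_C r
            | exact kwI_C r)
        | (rw [if_neg (by decide)]; first
            | exact zero_mem _
            | exact kzI_zero
            | exact kwI_zero)
  one_mem' := by
    refine ⟨?_, ?_, ?_, ?_, ?_, ?_, ?_, ?_, ?_, ?_, ?_, ?_, ?_, ?_, ?_, ?_⟩ <;>
      rw [Matrix.one_apply] <;>
      first
        | (rw [if_pos rfl]; first
            | exact one_mem _
            | exact kzI_one
            | exact kwI_one)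
        | (rw [if_neg (by decide)]; first
            | exact zero_mem _
            | exact kzI_zero
            | exact kwI_zero)
  mul_mem' := by
    rintro M N ⟨a00, a01, a02, a03, a10, a11, a12, a13, a20, a21, a22, a23, a30, a31, a32, a33⟩
      ⟨b00, b01, b02, b03, b10, b11, b12, b13, b20, b21, b22, b23, b30, b31, b32, b33⟩
    rw [mem_quadS_iff] at a00 a11 a20 a30 b00 b11 b20 b30
    rw [mem_Imod_iff] at a01 a21 a31 b01 b21 b31
    rw [mem_Jmod_iff] at a10 b10
    rw [mem_zImod_iff] at a02 a32 b02 b32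
    rw [mem_wImod_iff] at a03 a23 b03 b23
    rw [mem_zSmod_iff] at a12 b12
    rw [mem_wSmod_iff] at a13 b13
    refine ⟨?_, ?_, ?_, ?_, ?_, ?_, ?_, ?_, ?_, ?_, ?_, ?_, ?_, ?_, ?_, ?_⟩ <;>
      rw [Matrix.mul_apply, Fin.sum_univ_four]
    -- (0,0) ∈ S
    · exact mem_quadS_iff.2 (Cnd_add (Cnd_add (Cnd_add
        (Cnd_mul_of a00 b00 (by omega) (by omega) (by omega))
        (Cnd_mul_of a01 b10 (by omega) (by omega) (by omega)))
        (Cnd_mul_of a02 b20 (by omega) (by omega) (by omega)))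
        (Cnd_mul_of a03 b30 (by omega) (by omega) (by omega)))
    -- (0,1) ∈ I
    · exact mem_Imod_iff.2 (Cnd_add (Cnd_add (Cnd_add
        (Cnd_mul_of a00 b01 (by omega) (by omega) (by omega))
        (Cnd_mul_of a01 b11 (by omega) (by omega) (by omega)))
        (Cnd_mul_of a02 b21 (by omega) (by omega) (by omega)))
        (Cnd_mul_of a03 b31 (by omega) (by omega) (by omega)))
    -- (0,2) ∈ zI
    · exact mem_zImod_iff.2 (Cnd_add (Cnd_add (Cnd_add
        (Cnd_mul_of a00 b02 (by omega) (by omega) (by omega))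
        (Cnd_mul_of a01 b12 (by omega) (by omega) (by omega)))
        (Cnd_mul_kzI a02 b22))
        (Cnd_mul_of a03 b32 (by omega) (by omega) (by omega)))
    -- (0,3) ∈ wI
    · exact mem_wImod_iff.2 (Cnd_add (Cnd_add (Cnd_add
        (Cnd_mul_of a00 b03 (by omega) (by omega) (by omega))
        (Cnd_mul_of a01 b13 (by omega) (by omega) (by omega)))
        (Cnd_mul_of a02 b23 (by omega) (by omega) (by omega)))
        (Cnd_mul_kwI a03 b33))
    -- (1,0) ∈ J
    · exact mem_Jmod_iff.2 (Cnd_add (Cnd_add (Cnd_add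
        (Cnd_mul_of a10 b00 (by omega) (by omega) (by omega))
        (Cnd_mul_of a11 b10 (by omega) (by omega) (by omega)))
        (Cnd_mul_of a12 b20 (by omega) (by omega) (by omega)))
        (Cnd_mul_of a13 b30 (by omega) (by omega) (by omega)))
    -- (1,1) ∈ S
    · exact mem_quadS_iff.2 (Cnd_add (Cnd_add (Cnd_add
        (Cnd_mul_of a10 b01 (by omega) (by omega) (by omega))
        (Cnd_mul_of a11 b11 (by omega) (by omega) (by omega)))
        (Cnd_mul_of a12 b21 (by omega) (by omega) (by omega)))
        (Cnd_mul_of a13 b31 (by omega) (by omega) (by omega)))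
    -- (1,2) ∈ zS
    · exact mem_zSmod_iff.2 (Cnd_add (Cnd_add (Cnd_add
        (Cnd_mul_of a10 b02 (by omega) (by omega) (by omega))
        (Cnd_mul_of a11 b12 (by omega) (by omega) (by omega)))
        (Cnd_mul_kzI a12 b22))
        (Cnd_mul_of a13 b32 (by omega) (by omega) (by omega)))
    -- (1,3) ∈ wS
    · exact mem_wSmod_iff.2 (Cnd_add (Cnd_add (Cnd_add
        (Cnd_mul_of a10 b03 (by omega) (by omega) (by omega))
        (Cnd_mul_of a11 b13 (by omega) (by omega) (by omega)))
        (Cnd_mul_of a12 b23 (by omega) (by omega) (by omega)))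
        (Cnd_mul_kwI a13 b33))
    -- (2,0) ∈ S
    · exact mem_quadS_iff.2 (Cnd_add (Cnd_add (Cnd_add
        (Cnd_mul_of a20 b00 (by omega) (by omega) (by omega))
        (Cnd_mul_of a21 b10 (by omega) (by omega) (by omega)))
        (Cnd_kzI_mul a22 b20))
        (Cnd_mul_of a23 b30 (by omega) (by omega) (by omega)))
    -- (2,1) ∈ I
    · exact mem_Imod_iff.2 (Cnd_add (Cnd_add (Cnd_add
        (Cnd_mul_of a20 b01 (by omega) (by omega) (by omega))
        (Cnd_mul_of a21 b11 (by omega) (by omega) (by omega)))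
        (Cnd_kzI_mul a22 b21))
        (Cnd_mul_of a23 b31 (by omega) (by omega) (by omega)))
    -- (2,2) ∈ k + zI
    · exact add_mem_kzI (add_mem_kzI'
        (Cnd_add
          (Cnd_mul_of a20 b02 (by omega) (by omega) (by omega))
          (Cnd_mul_of a21 b12 (by omega) (by omega) (by omega)))
        (kzI_mul_kzI a22 b22))
        (Cnd_mul_of a23 b32 (by omega) (by omega) (by omega))
    -- (2,3) ∈ wI
    · exact mem_wImod_iff.2 (Cnd_add (Cnd_add (Cnd_add
        (Cnd_mul_of a20 b03 (by omega) (by omega) (by omega))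
        (Cnd_mul_of a21 b13 (by omega) (by omega) (by omega)))
        (Cnd_kzI_mul a22 b23))
        (Cnd_mul_kwI a23 b33))
    -- (3,0) ∈ S
    · exact mem_quadS_iff.2 (Cnd_add (Cnd_add (Cnd_add
        (Cnd_mul_of a30 b00 (by omega) (by omega) (by omega))
        (Cnd_mul_of a31 b10 (by omega) (by omega) (by omega)))
        (Cnd_mul_of a32 b20 (by omega) (by omega) (by omega)))
        (Cnd_kwI_mul a33 b30))
    -- (3,1) ∈ I
    · exact mem_Imod_iff.2 (Cnd_add (Cnd_add (Cnd_add
        (Cnd_mul_of a30 b01 (by omega) (by omega) (by omega))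
        (Cnd_mul_of a31 b11 (by omega) (by omega) (by omega)))
        (Cnd_mul_of a32 b21 (by omega) (by omega) (by omega)))
        (Cnd_kwI_mul a33 b31))
    -- (3,2) ∈ zI
    · exact mem_zImod_iff.2 (Cnd_add (Cnd_add (Cnd_add
        (Cnd_mul_of a30 b02 (by omega) (by omega) (by omega))
        (Cnd_mul_of a31 b12 (by omega) (by omega) (by omega)))
        (Cnd_mul_kzI a32 b22))
        (Cnd_kwI_mul a33 b32))
    -- (3,3) ∈ k + wI
    · exact add_mem_kwI' (Cnd_add (Cnd_add
        (Cnd_mul_of a30 b03 (by omega) (by omega) (by omega))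
        (Cnd_mul_of a31 b13 (by omega) (by omega) (by omega)))
        (Cnd_mul_of a32 b23 (by omega) (by omega) (by omega)))
        (kwI_mul_kwI a33 b33)

lemma r_mem_entries {r : MvPolynomial (Fin 4) k} (hr : r ∈ R4set k) :
    r ∈ quadS k ∧ r ∈ kzIset k ∧ r ∈ kwIset k := by
  obtain ⟨c, m, hm, rfl⟩ := hr
  have hc : Cnd 0 1 1 m := mem_zwI2mod_iff.1 hm
  refine ⟨?_, ⟨c, m, mem_zImod_iff.2 (Cnd_mono (by omega) (by omega) hc), rfl⟩,
    ⟨c, m, mem_wImod_iff.2 (Cnd_mono (by omega) (by omega) hc), rfl⟩⟩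
  exact Subalgebra.add_mem _ (Subalgebra.algebraMap_mem _ c)
    (Cnd_subset_quadS (Cnd_mono (by omega) (by omega) hc))

lemma smul_one_mem_A4 {r : MvPolynomial (Fin 4) k} (hr : r ∈ R4set k) :
    r • (1 : Matrix (Fin 4) (Fin 4) (MvPolynomial (Fin 4) k)) ∈ A4set k := by
  obtain ⟨hS, hz, hw⟩ := r_mem_entries hr
  have hentry : ∀ a b : Fin 4,
      (r • (1 : Matrix (Fin 4) (Fin 4) (MvPolynomial (Fin 4) k))) a b
        = if a = b then r else 0 := by
    intro a b
    rw [Matrix.smul_apply, Matrix.one_apply]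
    split <;> simp
  refine ⟨?_, ?_, ?_, ?_, ?_, ?_, ?_, ?_, ?_, ?_, ?_, ?_, ?_, ?_, ?_, ?_⟩ <;>
    rw [hentry] <;>
    first
      | (rw [if_neg (by decide)]; first
          | exact zero_mem _
          | exact kzI_zero
          | exact kwI_zero)
      | (rw [if_pos rfl]; first
          | exact hS
          | exact hz
          | exact hw)

lemma center_forward {M : Matrix (Fin 4) (Fin 4) (MvPolynomial (Fin 4) k)}
    (hM : M ∈ A4set k) (hcomm : ∀ N ∈ A4set k, M * N = N * M) :
    ∃ r ∈ R4set k, M = r • (1 : Matrix (Fin 4) (Fin 4) (MvPolynomial (Fin 4) k)) := by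
  obtain ⟨a00, a01, a02, a03, a10, a11, a12, a13, a20, a21, a22, a23, a30, a31, a32, a33⟩ := hM
  have hxne : (X 0 : MvPolynomial (Fin 4) k) ≠ 0 := MvPolynomial.X_ne_zero _
  have hzne : (X 2 : MvPolynomial (Fin 4) k) ≠ 0 := MvPolynomial.X_ne_zero _
  have hxzne : (X 0 * X 2 : MvPolynomial (Fin 4) k) ≠ 0 :=
    mul_ne_zero (MvPolynomial.X_ne_zero _) (MvPolynomial.X_ne_zero _)
  have hxwne : (X 0 * X 3 : MvPolynomial (Fin 4) k) ≠ 0 :=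
    mul_ne_zero (MvPolynomial.X_ne_zero _) (MvPolynomial.X_ne_zero _)
  -- the six test matrices
  have hN1 : Matrix.single 0 1 (X 0 : MvPolynomial (Fin 4) k) ∈ A4set k := by
    refine ⟨?_, ?_, ?_, ?_, ?_, ?_, ?_, ?_, ?_, ?_, ?_, ?_, ?_, ?_, ?_, ?_⟩ <;>
      simp only [Matrix.single, Matrix.of_apply] <;>
      first
        | (rw [if_neg (by decide)]; first
            | exact zero_mem _ | exact kzI_zero | exact kwI_zero)
        | (rw [if_pos (by decide)]; exact Submodule.subset_span (Set.mem_insert _ _))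
  have hN2 : Matrix.single 2 2 (1 : MvPolynomial (Fin 4) k) ∈ A4set k := by
    refine ⟨?_, ?_, ?_, ?_, ?_, ?_, ?_, ?_, ?_, ?_, ?_, ?_, ?_, ?_, ?_, ?_⟩ <;>
      simp only [Matrix.single, Matrix.of_apply] <;>
      first
        | (rw [if_neg (by decide)]; first
            | exact zero_mem _ | exact kzI_zero | exact kwI_zero)
        | (rw [if_pos (by decide)]; exact kzI_one)
  have hN3 : Matrix.single 3 3 (1 : MvPolynomial (Fin 4) k) ∈ A4set k := by
    refine ⟨?_, ?_, ?_, ?_, ?_, ?_, ?_, ?_, ?_, ?_, ?_, ?_, ?_, ?_, ?_, ?_⟩ <;>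
      simp only [Matrix.single, Matrix.of_apply] <;>
      first
        | (rw [if_neg (by decide)]; first
            | exact zero_mem _ | exact kzI_zero | exact kwI_zero)
        | (rw [if_pos (by decide)]; exact kwI_one)
  have hN4 : Matrix.single 1 0 (X 2 : MvPolynomial (Fin 4) k) ∈ A4set k := by
    refine ⟨?_, ?_, ?_, ?_, ?_, ?_, ?_, ?_, ?_, ?_, ?_, ?_, ?_, ?_, ?_, ?_⟩ <;>
      simp only [Matrix.single, Matrix.of_apply] <;>
      first
        | (rw [if_neg (by decide)]; first
            | exact zero_mem _ | exact kzI_zero | exact kwI_zero)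
        | (rw [if_pos (by decide)]; exact Submodule.subset_span (Set.mem_insert _ _))
  have hN5 : Matrix.single 0 2 (X 0 * X 2 : MvPolynomial (Fin 4) k) ∈ A4set k := by
    refine ⟨?_, ?_, ?_, ?_, ?_, ?_, ?_, ?_, ?_, ?_, ?_, ?_, ?_, ?_, ?_, ?_⟩ <;>
      simp only [Matrix.single, Matrix.of_apply] <;>
      first
        | (rw [if_neg (by decide)]; first
            | exact zero_mem _ | exact kzI_zero | exact kwI_zero)
        | (rw [if_pos (by decide)]; exact Submodule.subset_span (Set.mem_insert _ _))
  have hN6 : Matrix.single 0 3 (X 0 * X 3 : MvPolynomial (Fin 4) k) ∈ A4set k := by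
    refine ⟨?_, ?_, ?_, ?_, ?_, ?_, ?_, ?_, ?_, ?_, ?_, ?_, ?_, ?_, ?_, ?_⟩ <;>
      simp only [Matrix.single, Matrix.of_apply] <;>
      first
        | (rw [if_neg (by decide)]; first
            | exact zero_mem _ | exact kzI_zero | exact kwI_zero)
        | (rw [if_pos (by decide)]; exact Submodule.subset_span (Set.mem_insert _ _))
  have h1 := hcomm _ hN1
  have h2 := hcomm _ hN2
  have h3 := hcomm _ hN3
  have h4 := hcomm _ hN4
  have h5 := hcomm _ hN5
  have h6 := hcomm _ hN6
  -- column 0 zeros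
  have z10 : M 1 0 = 0 := by
    have e := Matrix.ext_iff.2 h1 1 1
    rw [Matrix.mul_single_apply_same,
      Matrix.single_mul_apply_of_ne _ _ _ _ _ (by decide)] at e
    exact (mul_eq_zero.1 e).resolve_right hxne
  have z20 : M 2 0 = 0 := by
    have e := Matrix.ext_iff.2 h1 2 1
    rw [Matrix.mul_single_apply_same,
      Matrix.single_mul_apply_of_ne _ _ _ _ _ (by decide)] at e
    exact (mul_eq_zero.1 e).resolve_right hxne
  have z30 : M 3 0 = 0 := by
    have e := Matrix.ext_iff.2 h1 3 1
    rw [Matrix.mul_single_apply_same,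
      Matrix.single_mul_apply_of_ne _ _ _ _ _ (by decide)] at e
    exact (mul_eq_zero.1 e).resolve_right hxne
  -- column 1 zeros
  have z01 : M 0 1 = 0 := by
    have e := Matrix.ext_iff.2 h4 0 0
    rw [Matrix.mul_single_apply_same,
      Matrix.single_mul_apply_of_ne _ _ _ _ _ (by decide)] at e
    exact (mul_eq_zero.1 e).resolve_right hzne
  have z21 : M 2 1 = 0 := by
    have e := Matrix.ext_iff.2 h4 2 0
    rw [Matrix.mul_single_apply_same,
      Matrix.single_mul_apply_of_ne _ _ _ _ _ (by decide)] at e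
    exact (mul_eq_zero.1 e).resolve_right hzne
  have z31 : M 3 1 = 0 := by
    have e := Matrix.ext_iff.2 h4 3 0
    rw [Matrix.mul_single_apply_same,
      Matrix.single_mul_apply_of_ne _ _ _ _ _ (by decide)] at e
    exact (mul_eq_zero.1 e).resolve_right hzne
  -- column 2 zeros
  have z02 : M 0 2 = 0 := by
    have e := Matrix.ext_iff.2 h2 0 2
    rw [Matrix.mul_single_apply_same,
      Matrix.single_mul_apply_of_ne _ _ _ _ _ (by decide)] at e
    simpa using e
  have z12 : M 1 2 = 0 := by
    have e := Matrix.ext_iff.2 h2 1 2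
    rw [Matrix.mul_single_apply_same,
      Matrix.single_mul_apply_of_ne _ _ _ _ _ (by decide)] at e
    simpa using e
  have z32 : M 3 2 = 0 := by
    have e := Matrix.ext_iff.2 h2 3 2
    rw [Matrix.mul_single_apply_same,
      Matrix.single_mul_apply_of_ne _ _ _ _ _ (by decide)] at e
    simpa using e
  -- column 3 zeros
  have z03 : M 0 3 = 0 := by
    have e := Matrix.ext_iff.2 h3 0 3
    rw [Matrix.mul_single_apply_same,
      Matrix.single_mul_apply_of_ne _ _ _ _ _ (by decide)] at e
    simpa using e
  have z13 : M 1 3 = 0 := by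
    have e := Matrix.ext_iff.2 h3 1 3
    rw [Matrix.mul_single_apply_same,
      Matrix.single_mul_apply_of_ne _ _ _ _ _ (by decide)] at e
    simpa using e
  have z23 : M 2 3 = 0 := by
    have e := Matrix.ext_iff.2 h3 2 3
    rw [Matrix.mul_single_apply_same,
      Matrix.single_mul_apply_of_ne _ _ _ _ _ (by decide)] at e
    simpa using e
  -- diagonal equalities
  have d11 : M 1 1 = M 0 0 := by
    have e := Matrix.ext_iff.2 h1 0 1
    rw [Matrix.mul_single_apply_same,
      Matrix.single_mul_apply_same] at e
    exact (mul_left_cancel₀ hxne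
      (show (X 0 : MvPolynomial (Fin 4) k) * M 0 0 = X 0 * M 1 1 by
        rw [mul_comm (X 0 : MvPolynomial (Fin 4) k) (M 0 0)]; exact e)).symm
  have d22 : M 2 2 = M 0 0 := by
    have e := Matrix.ext_iff.2 h5 0 2
    rw [Matrix.mul_single_apply_same,
      Matrix.single_mul_apply_same] at e
    exact (mul_left_cancel₀ hxzne
      (show (X 0 * X 2 : MvPolynomial (Fin 4) k) * M 0 0 = (X 0 * X 2) * M 2 2 by
        rw [mul_comm (X 0 * X 2 : MvPolynomial (Fin 4) k) (M 0 0)]; exact e)).symm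
  have d33 : M 3 3 = M 0 0 := by
    have e := Matrix.ext_iff.2 h6 0 3
    rw [Matrix.mul_single_apply_same,
      Matrix.single_mul_apply_same] at e
    exact (mul_left_cancel₀ hxwne
      (show (X 0 * X 3 : MvPolynomial (Fin 4) k) * M 0 0 = (X 0 * X 3) * M 3 3 by
        rw [mul_comm (X 0 * X 3 : MvPolynomial (Fin 4) k) (M 0 0)]; exact e)).symm
  refine ⟨M 0 0, ?_, ?_⟩
  · refine mem_R4set_of _ a00 ?_ ?_
    · rw [← d22]; exact a22
    · rw [← d33]; exact a33
  · ext a b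
    have hab : (a = 0 ∨ a = 1 ∨ a = 2 ∨ a = 3) ∧ (b = 0 ∨ b = 1 ∨ b = 2 ∨ b = 3) := by
      constructor <;> [revert a; revert b] <;> decide
    obtain ⟨ha, hb⟩ := hab
    rw [Matrix.smul_apply, Matrix.one_apply]
    rcases ha with rfl|rfl|rfl|rfl <;> rcases hb with rfl|rfl|rfl|rfl <;>
      simp [d11, d22, d33, z10, z20, z30, z01, z21, z31, z02, z12, z32, z03, z13, z23]


end Aux

/-- the set of matrices with entry pattern
`[[S, I, zI, wI], [J, S, zS, wS], [S, I, k + zI, wI], [S, I, zI, k + wI]]` is a unital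
`k`-subalgebra of `M₄(B)`, and its center equals `R·1₄` where `R = k + zwI²`. -/
theorem A4_subalgebra_center (k : Type*) [Field k] :
    ∃ 𝒜 : Subalgebra k (Matrix (Fin 4) (Fin 4) (MvPolynomial (Fin 4) k)),
      (𝒜 : Set (Matrix (Fin 4) (Fin 4) (MvPolynomial (Fin 4) k))) = A4set k ∧
      {M | M ∈ 𝒜 ∧ ∀ N ∈ 𝒜, M * N = N * M}
        = {M | ∃ r ∈ R4set k,
            M = r • (1 : Matrix (Fin 4) (Fin 4) (MvPolynomial (Fin 4) k))} := by
  refine ⟨A4alg k, rfl, ?_⟩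
  ext M
  simp only [Set.mem_setOf_eq]
  constructor
  · rintro ⟨hM, hcomm⟩
    exact center_forward hM hcomm
  · rintro ⟨r, hr, rfl⟩
    refine ⟨smul_one_mem_A4 hr, fun N _ => ?_⟩
  
    rw [Matrix.smul_mul, one_mul, Matrix.mul_smul, mul_one]
end
end
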